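/- arXiv:1810.06614 — 5 statements merged into one kernel-verified Lean document; each statement's English description precedes it below -/
import Mathlib

section
/- Let n ≥ 2 and let f : S^n → ℝ be continuous. Define g : ℝ^n → ℝ by g(y) = 2^{n−1} f(Λ^{−1}(y))/(1 + |y|²)^{n−1}. Then for every ψ ∈ S^n and 0 ≤ ρ < 1 with ρ ≠ ψ_{n+1}, the spherical transform and the spherical mean transform satisfy Sf(ψ, ρ) = Rg( ψ*/(ρ − ψ_{n+1}) , √(1 − ρ²)/|ρ − ψ_{n+1}| ), where ψ* = (ψ₁,…,ψ_n). -/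
open MeasureTheory

/-- The inverse stereographic projection
`Λ⁻¹(y) = (2y₁/(1+|y|²), …, 2y_n/(1+|y|²), (−1+|y|²)/(1+|y|²))`. -/
noncomputable def stereoInv (n : ℕ) (y : EuclideanSpace ℝ (Fin n)) :
    EuclideanSpace ℝ (Fin (n + 1)) :=
  WithLp.toLp 2 fun i =>
    Fin.lastCases ((-1 + ‖y‖ ^ 2) / (1 + ‖y‖ ^ 2))
      (fun j : Fin n => 2 * y j / (1 + ‖y‖ ^ 2)) i

/-- The spherical transform of `f : Sⁿ → ℝ`:
`Sf(ψ, ρ) = ∫_{{x ∈ Sⁿ : x·ψ = ρ}} f dH^{n−1}`. -/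
noncomputable def sphericalTransform (n : ℕ) (f : EuclideanSpace ℝ (Fin (n + 1)) → ℝ)
    (ψ : EuclideanSpace ℝ (Fin (n + 1))) (ρ : ℝ) : ℝ :=
  ∫ x in {x : EuclideanSpace ℝ (Fin (n + 1)) | ‖x‖ = 1 ∧ ∑ i, x i * ψ i = ρ},
    f x ∂(μH[(n : ℝ) - 1])

/-- The spherical mean transform of `g : ℝⁿ → ℝ`:
`Rg(x, t) = ∫_{{y : |y − x| = t}} g dH^{n−1}`. -/
noncomputable def sphericalMeanTransform (n : ℕ) (g : EuclideanSpace ℝ (Fin n) → ℝ)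
    (x : EuclideanSpace ℝ (Fin n)) (t : ℝ) : ℝ :=
  ∫ y in Metric.sphere x t, g y ∂(μH[(n : ℝ) - 1])

/-- `ψ* / (ρ - ψ_{n+1})`, the center of the image sphere. -/
noncomputable def projCenter (n : ℕ) (ψ : EuclideanSpace ℝ (Fin (n + 1))) (ρ : ℝ) :
    EuclideanSpace ℝ (Fin n) :=
  WithLp.toLp 2 fun i => ψ i.castSucc / (ρ - ψ (Fin.last n))

open MeasureTheory Set
open scoped ENNReal NNReal

lemma ennreal_le_of_forall_eps {d : ℝ} (hd : 0 ≤ d) {P Q : ℝ≥0∞}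
    (h : ∀ ε : ℝ≥0, 0 < ε → P ≤ (1 + (ε : ℝ≥0∞)) ^ (2 * d) * Q) : P ≤ Q := by
  apply ENNReal.le_of_forall_lt_one_mul_le
  intro a ha
  rcases eq_or_ne a 0 with rfl | ha0
  · simp
  rcases eq_or_ne d 0 with rfl | hd0
  · have := h 1 one_pos
    simp only [mul_zero, ENNReal.rpow_zero, one_mul] at this
    exact le_trans (mul_le_mul_left ha.le P) (by simpa using this)
  have hane : a ≠ ∞ := ha.ne_top
  have hd' : (0:ℝ) < 2 * d := by positivity
  -- choose ε with (1+ε)^(2d) = a⁻¹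
  set b : ℝ≥0∞ := a⁻¹ ^ (1 / (2 * d)) with hb
  have hb1 : 1 < b := by
    exact ENNReal.one_lt_rpow (ENNReal.one_lt_inv.2 ha) (by positivity)
  have hbne : b ≠ ∞ := by
    apply ENNReal.rpow_ne_top_of_nonneg (by positivity)
    simp [ENNReal.inv_ne_top, ha0]
  set ε : ℝ≥0 := (b - 1).toNNReal with hε
  have hεpos : 0 < ε := by
    simp only [hε]
    rw [ENNReal.toNNReal_pos_iff]
    exact ⟨tsub_pos_of_lt hb1, (ENNReal.sub_ne_top hbne).lt_top⟩
  have hcoe : (1 + (ε : ℝ≥0∞)) = b := by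
    rw [hε, ENNReal.coe_toNNReal (ENNReal.sub_ne_top hbne)]
    rw [add_tsub_cancel_of_le hb1.le]
  have hkey : (1 + (ε : ℝ≥0∞)) ^ (2 * d) = a⁻¹ := by
    rw [hcoe, hb, ← ENNReal.rpow_mul, one_div, inv_mul_cancel₀ hd'.ne', ENNReal.rpow_one]
  calc a * P ≤ a * ((1 + (ε : ℝ≥0∞)) ^ (2 * d) * Q) := by
        exact mul_le_mul_right (h ε hεpos) a
    _ = (a * a⁻¹) * Q := by rw [hkey]; ring
    _ = Q := by rw [ENNReal.mul_inv_cancel ha0 hane, one_mul]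

lemma map_hausdorff_conformal
    {X Y : Type*} [EMetricSpace X] [MeasurableSpace X] [BorelSpace X]
    [EMetricSpace Y] [MeasurableSpace Y] [BorelSpace Y]
    {d : ℝ} (hd : 0 ≤ d) {Φ : X → Y} (hΦ : Measurable Φ) {Ψ : Y → X}
    {A : Set X} (hA : MeasurableSet A) {B : Set Y} (hB : MeasurableSet B)
    {κ : Y → ℝ≥0} (hκ : Measurable κ) (hκpos : ∀ y, 0 < κ y)
    (hmaps : ∀ x ∈ A, Φ x ∈ B) (hΨA : ∀ y ∈ B, Ψ y ∈ A)
    (hinv : ∀ x ∈ A, Ψ (Φ x) = x) (hinv' : ∀ y ∈ B, Φ (Ψ y) = y)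
    (hdist : ∀ x ∈ A, ∀ x' ∈ A,
      edist (Φ x) (Φ x') = (κ (Φ x) : ℝ≥0∞) * (κ (Φ x') : ℝ≥0∞) * edist x x') :
    Measure.map Φ ((μH[d].restrict A).withDensity
        (fun x => (κ (Φ x) : ℝ≥0∞) ^ (2 * d))) = μH[d].restrict B := by
  have hW : Measurable (fun x => (κ (Φ x) : ℝ≥0∞) ^ (2 * d)) :=
    ((hκ.comp hΦ).coe_nnreal_ennreal).pow_const _
  ext t ht
  rw [Measure.map_apply hΦ ht, withDensity_apply _ (hΦ ht),
    Measure.restrict_restrict (hΦ ht), Measure.restrict_apply ht]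
  -- P = ∫⁻ x in Φ⁻¹ t ∩ A, κ(Φ x)^(2d) ∂μH, Q = μH (t ∩ B)
  set P := ∫⁻ x in Φ ⁻¹' t ∩ A, (κ (Φ x) : ℝ≥0∞) ^ (2 * d) ∂μH[d] with hP
  set Q := (μH[d] : Measure Y) (t ∩ B) with hQ
  have main : ∀ ε : ℝ≥0, 0 < ε →
      ∃ L : ℝ≥0∞, L ≤ P ∧ P ≤ (1 + (ε : ℝ≥0∞)) ^ (2 * d) * L
        ∧ L ≤ Q ∧ Q ≤ (1 + (ε : ℝ≥0∞)) ^ (2 * d) * L := by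
    intro ε hε
    set a : ℤ → ℝ≥0 := fun j => (1 + ε) ^ j with ha
    have h1ε : (1 : ℝ≥0) < 1 + ε := lt_add_of_pos_right 1 hε
    have hapos : ∀ j, 0 < a j := fun j => zpow_pos (lt_trans one_pos h1ε) j
    have hamono : StrictMono a := zpow_right_strictMono₀ h1ε
    set s : ℤ → Set X := fun j =>
      (Φ ⁻¹' t ∩ A) ∩ (fun x => κ (Φ x)) ⁻¹' (Ico (a j) (a (j + 1))) with hs
    set u : ℤ → Set Y := fun j => (t ∩ B) ∩ κ ⁻¹' (Ico (a j) (a (j + 1))) with hu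
    have hsm : ∀ j, MeasurableSet (s j) := fun j =>
      ((hΦ ht).inter hA).inter ((hκ.comp hΦ) measurableSet_Ico)
    have hum : ∀ j, MeasurableSet (u j) := fun j =>
      (ht.inter hB).inter (hκ measurableSet_Ico)
    have hdisj : Pairwise (Function.onFun Disjoint s) := by
      intro i j hij
      refine Set.disjoint_left.2 fun x hxi hxj => ?_
      rcases lt_or_gt_of_ne hij with h | h
      · exact absurd (lt_of_lt_of_le hxi.2.2 (hamono.monotone (by omega)))
          (not_lt.2 hxj.2.1)
      · exact absurd (lt_of_lt_of_le hxj.2.2 (hamono.monotone (by omega)))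
          (not_lt.2 hxi.2.1)
    have hudisj : Pairwise (Function.onFun Disjoint u) := by
      intro i j hij
      refine Set.disjoint_left.2 fun y hyi hyj => ?_
      rcases lt_or_gt_of_ne hij with h | h
      · exact absurd (lt_of_lt_of_le hyi.2.2 (hamono.monotone (by omega)))
          (not_lt.2 hyj.2.1)
      · exact absurd (lt_of_lt_of_le hyj.2.2 (hamono.monotone (by omega)))
          (not_lt.2 hyi.2.1)
    have hcover : ∀ r : ℝ≥0, 0 < r → ∃ j, r ∈ Ico (a j) (a (j + 1)) := by
      intro r hr
      obtain ⟨j, h1, h2⟩ := exists_mem_Ico_zpow (x := (r : ℝ)) (y := ((1 + ε : ℝ≥0) : ℝ))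
        (by exact_mod_cast hr) (by exact_mod_cast h1ε)
      exact ⟨j, by exact_mod_cast h1, by exact_mod_cast h2⟩
    have hsunion : (⋃ j, s j) = Φ ⁻¹' t ∩ A := by
      apply Subset.antisymm (iUnion_subset fun j => inter_subset_left)
      intro x hx
      obtain ⟨j, hj⟩ := hcover (κ (Φ x)) (hκpos _)
      exact mem_iUnion.2 ⟨j, hx, hj⟩
    have huunion : (⋃ j, u j) = t ∩ B := by
      apply Subset.antisymm (iUnion_subset fun j => inter_subset_left)
      intro y hy
      obtain ⟨j, hj⟩ := hcover (κ y) (hκpos _)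
      exact mem_iUnion.2 ⟨j, hy, hj⟩
    have himg : ∀ j, Φ '' s j = u j := by
      intro j
      apply Subset.antisymm
      · rintro y ⟨x, ⟨⟨hxt, hxA⟩, hxκ⟩, rfl⟩
        exact ⟨⟨hxt, hmaps x hxA⟩, hxκ⟩
      · rintro y ⟨⟨hyt, hyB⟩, hyκ⟩
        refine ⟨Ψ y, ⟨⟨?_, hΨA y hyB⟩, ?_⟩, hinv' y hyB⟩ <;>
          simp only [mem_preimage, hinv' y hyB] <;> assumption
    have himg' : ∀ j, Ψ '' u j = s j := by
      intro j
      apply Subset.antisymm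
      · rintro x ⟨y, ⟨⟨hyt, hyB⟩, hyκ⟩, rfl⟩
        refine ⟨⟨?_, hΨA y hyB⟩, ?_⟩ <;>
          simp only [mem_preimage, hinv' y hyB] <;> assumption
      · intro x hx
        have hxA : x ∈ A := hx.1.2
        exact ⟨Φ x, (himg j) ▸ mem_image_of_mem Φ hx, hinv x hxA⟩
    -- Lipschitz bounds
    have hlip : ∀ j, LipschitzOnWith ((a (j + 1)) ^ 2) Φ (s j) := by
      intro j x hx x' hx'
      rw [hdist x hx.1.2 x' hx'.1.2]
      have h1 : (κ (Φ x) : ℝ≥0∞) ≤ (a (j + 1) : ℝ≥0∞) := by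
        exact_mod_cast (hx.2.2).le
      have h2 : (κ (Φ x') : ℝ≥0∞) ≤ (a (j + 1) : ℝ≥0∞) := by
        exact_mod_cast (hx'.2.2).le
      calc (κ (Φ x) : ℝ≥0∞) * (κ (Φ x') : ℝ≥0∞) * edist x x'
          ≤ (a (j + 1) : ℝ≥0∞) * (a (j + 1) : ℝ≥0∞) * edist x x' :=
            mul_le_mul_left (mul_le_mul' h1 h2) _
        _ = ((a (j + 1) ^ 2 : ℝ≥0) : ℝ≥0∞) * edist x x' := by
            push_cast; ring_nf
    have hlip' : ∀ j, LipschitzOnWith (((a j)⁻¹) ^ 2) Ψ (u j) := by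
      intro j y hy y' hy'
      have hyB := hy.1.2
      have hy'B := hy'.1.2
      have hxA := hΨA y hyB
      have hx'A := hΨA y' hy'B
      have hdd := hdist _ hxA _ hx'A
      rw [hinv' y hyB, hinv' y' hy'B] at hdd
      have hone : (1 : ℝ≥0∞) ≤ (((a j)⁻¹ ^ 2 : ℝ≥0) : ℝ≥0∞) *
          ((κ y : ℝ≥0∞) * (κ y' : ℝ≥0∞)) := by
        have k1 : (a j : ℝ≥0) ≤ κ y := hy.2.1
        have k2 : (a j : ℝ≥0) ≤ κ y' := hy'.2.1
        have : (1 : ℝ≥0) ≤ (a j)⁻¹ ^ 2 * (κ y * κ y') := by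
          rw [sq, mul_mul_mul_comm]
          have e1 : (1:ℝ≥0) ≤ (a j)⁻¹ * κ y := by
            rw [← inv_mul_cancel₀ (hapos j).ne']
            exact mul_le_mul_right k1 _
          have e2 : (1:ℝ≥0) ≤ (a j)⁻¹ * κ y' := by
            rw [← inv_mul_cancel₀ (hapos j).ne']
            exact mul_le_mul_right k2 _
          calc (1:ℝ≥0) = 1 * 1 := (one_mul 1).symm
            _ ≤ ((a j)⁻¹ * κ y) * ((a j)⁻¹ * κ y') := mul_le_mul' e1 e2
        exact_mod_cast this
      calc edist (Ψ y) (Ψ y') = 1 * edist (Ψ y) (Ψ y') := (one_mul _).symm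
        _ ≤ ((((a j)⁻¹ ^ 2 : ℝ≥0)) : ℝ≥0∞) * ((κ y : ℝ≥0∞) * (κ y' : ℝ≥0∞)) *
            edist (Ψ y) (Ψ y') := mul_le_mul_left hone _
        _ = (((a j)⁻¹ ^ 2 : ℝ≥0) : ℝ≥0∞) *
            ((κ y : ℝ≥0∞) * (κ y' : ℝ≥0∞) * edist (Ψ y) (Ψ y')) := by ring
        _ = (((a j)⁻¹ ^ 2 : ℝ≥0) : ℝ≥0∞) * edist y y' := by rw [← hdd]
    -- coercion helper
    have hcoe2 : ∀ c : ℝ≥0, c ≠ 0 → ((c ^ 2 : ℝ≥0) : ℝ≥0∞) ^ d = (c : ℝ≥0∞) ^ (2 * d) := by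
      intro c hc
      rw [ENNReal.coe_pow, ← ENNReal.rpow_natCast ((c : ℝ≥0∞)) 2, ← ENNReal.rpow_mul]
      norm_num
    have hmeas_bound : ∀ j, (a j : ℝ≥0∞) ^ (2 * d) * μH[d] (s j) ≤ μH[d] (u j) := by
      intro j
      have h1 : μH[d] (s j) ≤ ((((a j)⁻¹ ^ 2 : ℝ≥0)) : ℝ≥0∞) ^ d * μH[d] (u j) := by
        rw [← himg' j]
        exact (hlip' j).hausdorffMeasure_image_le hd
      calc (a j : ℝ≥0∞) ^ (2 * d) * μH[d] (s j)
          ≤ (a j : ℝ≥0∞) ^ (2 * d) * (((((a j)⁻¹ ^ 2 : ℝ≥0)) : ℝ≥0∞) ^ d * μH[d] (u j)) :=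
            mul_le_mul_right h1 _
        _ = μH[d] (u j) := by
            rw [hcoe2 _ (by simp [(hapos j).ne']), ← mul_assoc]
            rw [ENNReal.coe_inv (hapos j).ne']
            rw [← ENNReal.rpow_neg_one (a j : ℝ≥0∞), ← ENNReal.rpow_mul, ← ENNReal.rpow_add _ _
              (by exact_mod_cast (hapos j).ne') (by exact ENNReal.coe_ne_top)]
            norm_num
    have hmeas_bound' : ∀ j, μH[d] (u j) ≤ (1 + (ε:ℝ≥0∞)) ^ (2 * d) *
        ((a j : ℝ≥0∞) ^ (2 * d) * μH[d] (s j)) := by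
      intro j
      have h1 : μH[d] (u j) ≤ ((((a (j+1)) ^ 2 : ℝ≥0)) : ℝ≥0∞) ^ d * μH[d] (s j) := by
        rw [← himg j]
        exact (hlip j).hausdorffMeasure_image_le hd
      refine h1.trans (le_of_eq ?_)
      rw [hcoe2 _ (hapos (j+1)).ne']
      have : ((a (j+1) : ℝ≥0) : ℝ≥0∞) = (1 + (ε:ℝ≥0∞)) * (a j : ℝ≥0∞) := by
        have : a (j+1) = (1 + ε) * a j := by
          rw [ha]; dsimp only
          rw [zpow_add_one₀ (by positivity : (1+ε : ℝ≥0) ≠ 0)]; ring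
        rw [this]; push_cast; ring
      rw [this, ENNReal.mul_rpow_of_nonneg _ _ (by positivity), mul_assoc]
    -- the three quantities
    refine ⟨∑' j, (a j : ℝ≥0∞) ^ (2 * d) * μH[d] (s j), ?_, ?_, ?_, ?_⟩
    · -- L ≤ P
      rw [hP, ← hsunion, lintegral_iUnion hsm hdisj]
      refine ENNReal.tsum_le_tsum fun j => ?_
      rw [← setLIntegral_const (s j) ((a j : ℝ≥0∞) ^ (2*d))]
      refine setLIntegral_mono hW fun x hx => ?_
      exact ENNReal.rpow_le_rpow (by exact_mod_cast hx.2.1) (by positivity)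
    · -- P ≤ C * L
      rw [hP, ← hsunion, lintegral_iUnion hsm hdisj, ← ENNReal.tsum_mul_left]
      refine ENNReal.tsum_le_tsum fun j => ?_
      have : ∫⁻ x in s j, (κ (Φ x) : ℝ≥0∞) ^ (2 * d) ∂μH[d]
          ≤ (a (j+1) : ℝ≥0∞) ^ (2 * d) * μH[d] (s j) := by
        rw [← setLIntegral_const (s j) _]
        refine setLIntegral_mono' (hsm j) fun x hx => ?_
        exact ENNReal.rpow_le_rpow (by exact_mod_cast hx.2.2.le) (by positivity)
      refine this.trans (le_of_eq ?_)
      have : ((a (j+1) : ℝ≥0) : ℝ≥0∞) = (1 + (ε:ℝ≥0∞)) * (a j : ℝ≥0∞) := by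
        have : a (j+1) = (1 + ε) * a j := by
          rw [ha]; dsimp only
          rw [zpow_add_one₀ (by positivity : (1+ε : ℝ≥0) ≠ 0)]; ring
        rw [this]; push_cast; ring
      rw [this, ENNReal.mul_rpow_of_nonneg _ _ (by positivity), mul_assoc]
    · -- L ≤ Q
      rw [hQ, ← huunion, measure_iUnion hudisj hum]
      exact ENNReal.tsum_le_tsum hmeas_bound
    · -- Q ≤ C * L
      rw [hQ, ← huunion, measure_iUnion hudisj hum, ← ENNReal.tsum_mul_left]
      exact ENNReal.tsum_le_tsum hmeas_bound'
  have h1 : P ≤ Q := ennreal_le_of_forall_eps hd fun ε hε => by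
    obtain ⟨L, hLP, hPL, hLQ, hQL⟩ := main ε hε
    exact hPL.trans (mul_le_mul_right hLQ _)
  have h2 : Q ≤ P := ennreal_le_of_forall_eps hd fun ε hε => by
    obtain ⟨L, hLP, hPL, hLQ, hQL⟩ := main ε hε
    exact hQL.trans (mul_le_mul_right hLP _)
  exact le_antisymm h1 h2


noncomputable def sProj (n : ℕ) (x : EuclideanSpace ℝ (Fin (n + 1))) :
    EuclideanSpace ℝ (Fin n) :=
  WithLp.toLp 2 fun i => x i.castSucc / (1 - x (Fin.last n))

lemma es_norm_sq {m : ℕ} (x : EuclideanSpace ℝ (Fin m)) : ‖x‖ ^ 2 = ∑ i, x i ^ 2 := by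
  rw [EuclideanSpace.norm_eq, Real.sq_sqrt (by positivity)]
  congr 1; ext i; rw [Real.norm_eq_abs, sq_abs]

lemma es_dist_sq {m : ℕ} (x y : EuclideanSpace ℝ (Fin m)) :
    dist x y ^ 2 = ∑ i, (x i - y i) ^ 2 := by
  rw [EuclideanSpace.dist_eq, Real.sq_sqrt (by positivity)]
  congr 1; ext i; rw [Real.dist_eq, sq_abs]

section Geom

variable {n : ℕ}

lemma sum_castSucc_sq (x : EuclideanSpace ℝ (Fin (n + 1))) (hx : ‖x‖ = 1) :
    ∑ i : Fin n, x i.castSucc ^ 2 = 1 - x (Fin.last n) ^ 2 := by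
  have h := es_norm_sq x
  rw [hx, Fin.sum_univ_castSucc] at h
  norm_num at h
  linarith

lemma one_add_norm_sProj_sq (x : EuclideanSpace ℝ (Fin (n + 1))) (hx : ‖x‖ = 1)
    (hlast : x (Fin.last n) < 1) :
    1 + ‖sProj n x‖ ^ 2 = 2 / (1 - x (Fin.last n)) := by
  have hc : (1 : ℝ) - x (Fin.last n) ≠ 0 := by linarith
  rw [es_norm_sq]
  have h1 : ∀ i : Fin n, (sProj n x) i ^ 2 = x i.castSucc ^ 2 / (1 - x (Fin.last n)) ^ 2 := by
    intro i
    simp only [sProj, PiLp.toLp_apply]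
    rw [div_pow]
  rw [Finset.sum_congr rfl fun i _ => h1 i, ← Finset.sum_div, sum_castSucc_sq x hx]
  field_simp
  ring

lemma stereoInv_sProj (x : EuclideanSpace ℝ (Fin (n + 1))) (hx : ‖x‖ = 1)
    (hlast : x (Fin.last n) < 1) : stereoInv n (sProj n x) = x := by
  have hc : (1 : ℝ) - x (Fin.last n) ≠ 0 := by linarith
  have hN : ‖sProj n x‖ ^ 2 = 2 / (1 - x (Fin.last n)) - 1 := by
    have := one_add_norm_sProj_sq x hx hlast; linarith
  ext i
  induction i using Fin.lastCases with
  | last =>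
    simp only [stereoInv, PiLp.toLp_apply, Fin.lastCases_last, hN]
    field_simp
    try ring
  | cast i =>
    simp only [stereoInv, PiLp.toLp_apply, Fin.lastCases_castSucc, hN]; simp only [sProj, PiLp.toLp_apply]
    field_simp
    try ring

lemma norm_stereoInv (y : EuclideanSpace ℝ (Fin n)) : ‖stereoInv n y‖ = 1 := by
  have hS : ‖y‖ ^ 2 = ∑ i, y i ^ 2 := es_norm_sq y
  have hpos : (0:ℝ) < 1 + ‖y‖ ^ 2 := by positivity
  have key : ‖stereoInv n y‖ ^ 2 = 1 := by
    rw [es_norm_sq, Fin.sum_univ_castSucc]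
    simp only [stereoInv, PiLp.toLp_apply, Fin.lastCases_castSucc, Fin.lastCases_last]
    have h1 : ∀ i : Fin n, (2 * y i / (1 + ‖y‖ ^ 2)) ^ 2
        = y i ^ 2 * (4 / (1 + ‖y‖ ^ 2) ^ 2) := by
      intro i; field_simp; ring
    rw [Finset.sum_congr rfl fun i _ => h1 i, ← Finset.sum_mul, ← hS]
    field_simp
    ring
  nlinarith [norm_nonneg (stereoInv n y)]

lemma sProj_stereoInv (y : EuclideanSpace ℝ (Fin n)) : sProj n (stereoInv n y) = y := by
  have hpos : (0:ℝ) < 1 + ‖y‖ ^ 2 := by positivity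
  ext i
  simp only [sProj, stereoInv, PiLp.toLp_apply, Fin.lastCases_castSucc, Fin.lastCases_last]
  have h2 : 1 - (-1 + ‖y‖ ^ 2) / (1 + ‖y‖ ^ 2) = 2 / (1 + ‖y‖ ^ 2) := by
    field_simp; ring
  rw [h2]
  field_simp

lemma dist_sProj_sq (x x' : EuclideanSpace ℝ (Fin (n + 1))) (hx : ‖x‖ = 1) (hx' : ‖x'‖ = 1)
    (h1 : x (Fin.last n) < 1) (h1' : x' (Fin.last n) < 1) :
    dist (sProj n x) (sProj n x') ^ 2
      = dist x x' ^ 2 / ((1 - x (Fin.last n)) * (1 - x' (Fin.last n))) := by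
  set a := x (Fin.last n) with ha
  set a' := x' (Fin.last n) with ha'
  have hc : (1:ℝ) - a ≠ 0 := by linarith
  have hc' : (1:ℝ) - a' ≠ 0 := by linarith
  set S := ∑ i : Fin n, x i.castSucc * x' i.castSucc with hSdef
  have e1 : ∑ i : Fin n, x i.castSucc ^ 2 = 1 - a ^ 2 := sum_castSucc_sq x hx
  have e2 : ∑ i : Fin n, x' i.castSucc ^ 2 = 1 - a' ^ 2 := sum_castSucc_sq x' hx'
  have ed : dist x x' ^ 2 = 2 - 2 * S - 2 * a * a' := by
    rw [es_dist_sq, Fin.sum_univ_castSucc]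
    have h2 : ∀ i : Fin n, (x i.castSucc - x' i.castSucc) ^ 2
        = x i.castSucc ^ 2 + x' i.castSucc ^ 2 - 2 * (x i.castSucc * x' i.castSucc) := by
      intro i; ring
    rw [Finset.sum_congr rfl fun i _ => h2 i]
    rw [Finset.sum_sub_distrib, Finset.sum_add_distrib, ← Finset.mul_sum, e1, e2, ← hSdef]
    ring
  have edy : dist (sProj n x) (sProj n x') ^ 2
      = (1 - a ^ 2) * ((1-a)^2)⁻¹ + (1 - a' ^ 2) * ((1-a')^2)⁻¹
        - S * (2 / ((1-a) * (1-a'))) := by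
    rw [es_dist_sq]
    have h3 : ∀ i : Fin n, ((sProj n x) i - (sProj n x') i) ^ 2
        = x i.castSucc ^ 2 * ((1-a)^2)⁻¹ + x' i.castSucc ^ 2 * ((1-a')^2)⁻¹
          - x i.castSucc * x' i.castSucc * (2 / ((1-a) * (1-a'))) := by
      intro i
      simp only [sProj, PiLp.toLp_apply, ← ha, ← ha']
      field_simp
      ring
    rw [Finset.sum_congr rfl fun i _ => h3 i]
    rw [Finset.sum_sub_distrib, Finset.sum_add_distrib, ← Finset.sum_mul, ← Finset.sum_mul,
      ← Finset.sum_mul, e1, e2, ← hSdef]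
  rw [edy, ed]
  field_simp
  try ring

end Geom

section Geom2

variable {n : ℕ}

noncomputable def kfac (n : ℕ) (y : EuclideanSpace ℝ (Fin n)) : ℝ≥0 :=
  Real.toNNReal (Real.sqrt ((1 + ‖y‖ ^ 2) / 2))

lemma kfac_coe (y : EuclideanSpace ℝ (Fin n)) :
    (kfac n y : ℝ) = Real.sqrt ((1 + ‖y‖ ^ 2) / 2) := by
  rw [kfac, Real.coe_toNNReal _ (Real.sqrt_nonneg _)]

lemma kfac_pos (y : EuclideanSpace ℝ (Fin n)) : 0 < kfac n y := by
  rw [kfac, Real.toNNReal_pos]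
  exact Real.sqrt_pos.2 (by positivity)

lemma kfac_continuous : Continuous (kfac n) := by
  apply Continuous.comp continuous_real_toNNReal
  exact ((continuous_const.add ((continuous_norm).pow 2)).div_const 2).sqrt

lemma kfac_sq (y : EuclideanSpace ℝ (Fin n)) :
    (kfac n y : ℝ) ^ 2 = (1 + ‖y‖ ^ 2) / 2 := by
  rw [kfac_coe, Real.sq_sqrt (by positivity)]

lemma kfac_sProj_sq (x : EuclideanSpace ℝ (Fin (n + 1))) (hx : ‖x‖ = 1)
    (hlast : x (Fin.last n) < 1) :
    (kfac n (sProj n x) : ℝ) ^ 2 = 1 / (1 - x (Fin.last n)) := by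
  rw [kfac_sq, one_add_norm_sProj_sq x hx hlast]
  rw [div_right_comm]
  norm_num

lemma dist_sProj (x x' : EuclideanSpace ℝ (Fin (n + 1))) (hx : ‖x‖ = 1) (hx' : ‖x'‖ = 1)
    (h1 : x (Fin.last n) < 1) (h1' : x' (Fin.last n) < 1) :
    dist (sProj n x) (sProj n x')
      = (kfac n (sProj n x) : ℝ) * (kfac n (sProj n x') : ℝ) * dist x x' := by
  have hsq : (dist (sProj n x) (sProj n x')) ^ 2
      = ((kfac n (sProj n x) : ℝ) * (kfac n (sProj n x') : ℝ) * dist x x') ^ 2 := by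
    rw [dist_sProj_sq x x' hx hx' h1 h1', mul_pow, mul_pow,
      kfac_sProj_sq x hx h1, kfac_sProj_sq x' hx' h1']
    field_simp
  have hnn1 : (0:ℝ) ≤ dist (sProj n x) (sProj n x') := dist_nonneg
  have hnn2 : (0:ℝ) ≤ (kfac n (sProj n x) : ℝ) * (kfac n (sProj n x') : ℝ) * dist x x' := by
    positivity
  nlinarith [hsq, hnn1, hnn2]

lemma edist_sProj (x x' : EuclideanSpace ℝ (Fin (n + 1))) (hx : ‖x‖ = 1) (hx' : ‖x'‖ = 1)
    (h1 : x (Fin.last n) < 1) (h1' : x' (Fin.last n) < 1) :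
    edist (sProj n x) (sProj n x')
      = (kfac n (sProj n x) : ℝ≥0∞) * (kfac n (sProj n x') : ℝ≥0∞) * edist x x' := by
  rw [edist_dist, edist_dist, dist_sProj x x' hx hx' h1 h1']
  rw [ENNReal.ofReal_mul (by positivity), ENNReal.ofReal_mul (by positivity)]
  rw [ENNReal.ofReal_coe_nnreal, ENNReal.ofReal_coe_nnreal]

end Geom2

section Plane

variable {n : ℕ} (ψ : EuclideanSpace ℝ (Fin (n + 1))) (ρ : ℝ)

lemma last_lt_one (hψ : ‖ψ‖ = 1) (hρψ : ρ ≠ ψ (Fin.last n))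
    (x : EuclideanSpace ℝ (Fin (n + 1))) (hx1 : ‖x‖ = 1)
    (hx2 : ∑ i, x i * ψ i = ρ) : x (Fin.last n) < 1 := by
  have hsum := sum_castSucc_sq x hx1
  have hnn : (0:ℝ) ≤ ∑ i : Fin n, x i.castSucc ^ 2 :=
    Finset.sum_nonneg fun i _ => sq_nonneg _
  have hle : x (Fin.last n) ≤ 1 := by nlinarith
  rcases lt_or_eq_of_le hle with h | h
  · exact h
  · exfalso
    have hzero : ∑ i : Fin n, x i.castSucc ^ 2 = 0 := by rw [hsum, h]; ring
    have hall : ∀ i : Fin n, x i.castSucc = 0 := by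
      intro i
      have := (Finset.sum_eq_zero_iff_of_nonneg
        (fun i (_ : i ∈ Finset.univ) => sq_nonneg (x i.castSucc))).1 hzero i (Finset.mem_univ i)
      exact (pow_eq_zero_iff (by norm_num : (2:ℕ) ≠ 0)).mp this
    rw [Fin.sum_univ_castSucc] at hx2
    have : ∑ i : Fin n, x i.castSucc * ψ i.castSucc = 0 :=
      Finset.sum_eq_zero fun i _ => by rw [hall i, zero_mul]
    rw [this, zero_add, h, one_mul] at hx2
    exact hρψ hx2.symm

lemma dist_sProj_center (hψ : ‖ψ‖ = 1) (hρ0 : 0 ≤ ρ) (hρ1 : ρ < 1)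
    (hρψ : ρ ≠ ψ (Fin.last n))
    (x : EuclideanSpace ℝ (Fin (n + 1))) (hx1 : ‖x‖ = 1)
    (hx2 : ∑ i, x i * ψ i = ρ) :
    dist (sProj n x) (WithLp.toLp 2 fun i => ψ i.castSucc / (ρ - ψ (Fin.last n)) : EuclideanSpace ℝ (Fin n))
      = Real.sqrt (1 - ρ ^ 2) / |ρ - ψ (Fin.last n)| := by
  set a := x (Fin.last n) with ha
  set b := ψ (Fin.last n) with hb
  have hlast : a < 1 := last_lt_one ψ ρ hψ hρψ x hx1 hx2
  have hc1 : (1:ℝ) - a ≠ 0 := by linarith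
  have hc2 : ρ - b ≠ 0 := sub_ne_zero.2 hρψ
  have hρsq : ρ ^ 2 ≤ 1 := by nlinarith
  set T := ∑ i : Fin n, x i.castSucc * ψ i.castSucc with hTdef
  have hT : T = ρ - a * b := by
    rw [Fin.sum_univ_castSucc] at hx2
    rw [hTdef]; linarith
  have e1 : ∑ i : Fin n, x i.castSucc ^ 2 = 1 - a ^ 2 := sum_castSucc_sq x hx1
  have e2 : ∑ i : Fin n, ψ i.castSucc ^ 2 = 1 - b ^ 2 := sum_castSucc_sq ψ hψ
  have hsq : dist (sProj n x)
      (WithLp.toLp 2 fun i => ψ i.castSucc / (ρ - b) : EuclideanSpace ℝ (Fin n)) ^ 2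
      = (1 - ρ ^ 2) / (ρ - b) ^ 2 := by
    rw [es_dist_sq]
    have h3 : ∀ i : Fin n,
        ((sProj n x) i - (WithLp.toLp 2 fun i => ψ i.castSucc / (ρ - b) : EuclideanSpace ℝ (Fin n)) i) ^ 2
        = x i.castSucc ^ 2 * ((1-a)^2)⁻¹ + ψ i.castSucc ^ 2 * ((ρ-b)^2)⁻¹
          - x i.castSucc * ψ i.castSucc * (2 / ((1-a) * (ρ-b))) := by
      intro i
      simp only [sProj, PiLp.toLp_apply, ← ha]
      field_simp
      ring
    rw [Finset.sum_congr rfl fun i _ => h3 i]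
    rw [Finset.sum_sub_distrib, Finset.sum_add_distrib, ← Finset.sum_mul, ← Finset.sum_mul,
      ← Finset.sum_mul, e1, e2, ← hTdef, hT]
    field_simp
    ring
  have hrhs : (Real.sqrt (1 - ρ ^ 2) / |ρ - b|) ^ 2 = (1 - ρ ^ 2) / (ρ - b) ^ 2 := by
    rw [div_pow, Real.sq_sqrt (by linarith), sq_abs]
  have hnn1 : (0:ℝ) ≤ dist (sProj n x)
      (WithLp.toLp 2 fun i => ψ i.castSucc / (ρ - b) : EuclideanSpace ℝ (Fin n)) := dist_nonneg
  have hnn2 : (0:ℝ) ≤ Real.sqrt (1 - ρ ^ 2) / |ρ - b| := by positivity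
  nlinarith [hsq, hrhs, hnn1, hnn2]

lemma stereoInv_mem_plane (hψ : ‖ψ‖ = 1) (hρ0 : 0 ≤ ρ) (hρ1 : ρ < 1)
    (hρψ : ρ ≠ ψ (Fin.last n))
    (y : EuclideanSpace ℝ (Fin n))
    (hy : dist y (WithLp.toLp 2 fun i => ψ i.castSucc / (ρ - ψ (Fin.last n)) : EuclideanSpace ℝ (Fin n))
      = Real.sqrt (1 - ρ ^ 2) / |ρ - ψ (Fin.last n)|) :
    ∑ i, stereoInv n y i * ψ i = ρ := by
  set b := ψ (Fin.last n) with hb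
  have hc2 : ρ - b ≠ 0 := sub_ne_zero.2 hρψ
  set N := ‖y‖ ^ 2 with hN
  have hNval : N = ∑ i, y i ^ 2 := es_norm_sq y
  have hNpos : (0:ℝ) < 1 + N := by rw [hN]; positivity
  set T := ∑ i : Fin n, y i * ψ i.castSucc with hTdef
  have e2 : ∑ i : Fin n, ψ i.castSucc ^ 2 = 1 - b ^ 2 := sum_castSucc_sq ψ hψ
  -- squared distance equation
  have hyd : dist y (WithLp.toLp 2 fun i => ψ i.castSucc / (ρ - b) : EuclideanSpace ℝ (Fin n)) ^ 2
      = (1 - ρ ^ 2) / (ρ - b) ^ 2 := by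
    rw [hy, div_pow, Real.sq_sqrt (by nlinarith), sq_abs]
  have hexp : N - T * (2 / (ρ - b)) + (1 - b ^ 2) * ((ρ-b)^2)⁻¹ = (1 - ρ ^ 2) / (ρ - b) ^ 2 := by
    rw [← hyd, es_dist_sq]
    have h3 : ∀ i : Fin n,
        (y i - (WithLp.toLp 2 fun i => ψ i.castSucc / (ρ - b) : EuclideanSpace ℝ (Fin n)) i) ^ 2
        = y i ^ 2 + ψ i.castSucc ^ 2 * ((ρ-b)^2)⁻¹ - y i * ψ i.castSucc * (2 / (ρ-b)) := by
      intro i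
      simp only [PiLp.toLp_apply]
      field_simp
      ring
    rw [Finset.sum_congr rfl fun i _ => h3 i]
    rw [Finset.sum_sub_distrib, Finset.sum_add_distrib, ← Finset.sum_mul, ← Finset.sum_mul,
      ← hNval, e2, ← hTdef]
    ring
  have h2T : 2 * T = N * (ρ - b) + ρ + b := by
    have h4 : (N - T * (2 / (ρ - b)) + (1 - b ^ 2) * ((ρ-b)^2)⁻¹) * (ρ - b) ^ 2
        = ((1 - ρ ^ 2) / (ρ - b) ^ 2) * (ρ - b) ^ 2 := by rw [hexp]
    field_simp at h4
    have h7 : (ρ - b)^4 * (2*T) = (ρ - b)^4 * (N*(ρ-b) + ρ + b) := by linear_combination -(ρ - b) ^ 3 * h4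
    exact mul_left_cancel₀ (pow_ne_zero 4 hc2) h7
  rw [Fin.sum_univ_castSucc]
  simp only [stereoInv, PiLp.toLp_apply, Fin.lastCases_castSucc, Fin.lastCases_last]
  have h5 : ∀ i : Fin n, 2 * y i / (1 + ‖y‖ ^ 2) * ψ i.castSucc
      = (y i * ψ i.castSucc) * (2 / (1 + N)) := by
    intro i; rw [← hN]; field_simp
  rw [Finset.sum_congr rfl fun i _ => h5 i, ← Finset.sum_mul, ← hTdef, ← hN, ← hb]
  field_simp
  linear_combination h2T
end Plane

/-- Relation between the spherical transform of `f` and the spherical mean transform of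
`g(y) = 2^{n−1} f(Λ⁻¹(y))/(1 + |y|²)^{n−1}`:
`Sf(ψ, ρ) = Rg(ψ*/(ρ − ψ_{n+1}), √(1 − ρ²)/|ρ − ψ_{n+1}|)`. -/

theorem stmt2 (n : ℕ) (hn : 2 ≤ n) (f : EuclideanSpace ℝ (Fin (n + 1)) → ℝ)
    (hf : Continuous f) (g : EuclideanSpace ℝ (Fin n) → ℝ)
    (hg : ∀ y, g y = 2 ^ (n - 1) * f (stereoInv n y) / (1 + ‖y‖ ^ 2) ^ (n - 1))
    (ψ : EuclideanSpace ℝ (Fin (n + 1))) (hψ : ‖ψ‖ = 1)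
    (ρ : ℝ) (hρ0 : 0 ≤ ρ) (hρ1 : ρ < 1) (hρψ : ρ ≠ ψ (Fin.last n)) :
    sphericalTransform n f ψ ρ =
      sphericalMeanTransform n g (projCenter n ψ ρ)
        (Real.sqrt (1 - ρ ^ 2) / |ρ - ψ (Fin.last n)|) := by
  classical
  have hd : (0:ℝ) ≤ (n : ℝ) - 1 := by
    have h2n : (2:ℝ) ≤ (n:ℝ) := by exact_mod_cast hn
    linarith
  set d : ℝ := (n : ℝ) - 1 with hd'
  set A : Set (EuclideanSpace ℝ (Fin (n+1))) :=
    {x : EuclideanSpace ℝ (Fin (n + 1)) | ‖x‖ = 1 ∧ ∑ i, x i * ψ i = ρ} with hA'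
  set t : ℝ := Real.sqrt (1 - ρ^2) / |ρ - ψ (Fin.last n)| with ht'
  set B : Set (EuclideanSpace ℝ (Fin n)) := Metric.sphere (projCenter n ψ ρ) t with hB'
  have hcenter : projCenter n ψ ρ
      = (WithLp.toLp 2 fun i => ψ i.castSucc / (ρ - ψ (Fin.last n)) : EuclideanSpace ℝ (Fin n)) := rfl
  have hAm : MeasurableSet A := by
    rw [hA', Set.setOf_and]
    have h1 : IsClosed {x : EuclideanSpace ℝ (Fin (n+1)) | ‖x‖ = 1} :=
      isClosed_eq continuous_norm continuous_const
    have h2 : IsClosed {x : EuclideanSpace ℝ (Fin (n+1)) | ∑ i, x i * ψ i = ρ} :=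
      isClosed_eq (continuous_finset_sum _ fun i _ => (PiLp.continuous_apply 2 _ i).mul continuous_const)
        continuous_const
    exact (h1.inter h2).measurableSet
  have hBm : MeasurableSet B := Metric.isClosed_sphere.measurableSet
  have hΦ : Measurable (sProj n) :=
    (PiLp.continuous_toLp 2 _).measurable.comp (f := fun x i => (sProj n x) i) <|
    measurable_pi_lambda _ fun i =>
      (PiLp.continuous_apply 2 _ i.castSucc).measurable.div
        (measurable_const.sub (PiLp.continuous_apply 2 _ (Fin.last n)).measurable)
  have hκm : Measurable (kfac n) := kfac_continuous.measurable
  have hAmem : ∀ x ∈ A, ‖x‖ = 1 ∧ x (Fin.last n) < 1 := by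
    intro x hx
    rw [hA'] at hx
    exact ⟨hx.1, last_lt_one ψ ρ hψ hρψ x hx.1 hx.2⟩
  have hmaps : ∀ x ∈ A, sProj n x ∈ B := by
    intro x hx
    rw [hA'] at hx
    rw [hB', Metric.mem_sphere, hcenter, ht']
    exact dist_sProj_center ψ ρ hψ hρ0 hρ1 hρψ x hx.1 hx.2
  have hΨA : ∀ y ∈ B, stereoInv n y ∈ A := by
    intro y hy
    rw [hB', Metric.mem_sphere, hcenter, ht'] at hy
    rw [hA']
    exact ⟨norm_stereoInv y, stereoInv_mem_plane ψ ρ hψ hρ0 hρ1 hρψ y hy⟩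
  have hinv : ∀ x ∈ A, stereoInv n (sProj n x) = x := fun x hx =>
    stereoInv_sProj x (hAmem x hx).1 (hAmem x hx).2
  have hinv' : ∀ y ∈ B, sProj n (stereoInv n y) = y := fun y _ => sProj_stereoInv y
  have hdist : ∀ x ∈ A, ∀ x' ∈ A, edist (sProj n x) (sProj n x')
      = (kfac n (sProj n x) : ℝ≥0∞) * (kfac n (sProj n x') : ℝ≥0∞) * edist x x' :=
    fun x hx x' hx' => edist_sProj x x' (hAmem x hx).1 (hAmem x' hx').1
      (hAmem x hx).2 (hAmem x' hx').2
  have hmeq := map_hausdorff_conformal (d := d) hd hΦ (Ψ := stereoInv n) hAm hBm hκm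
      kfac_pos hmaps hΨA hinv hinv' hdist
  set w : EuclideanSpace ℝ (Fin (n+1)) → ℝ≥0 :=
    fun x => Real.toNNReal ((kfac n (sProj n x) : ℝ) ^ (2 * d)) with hw'
  have hrm : Measurable (fun x => ((kfac n (sProj n x) : ℝ))) :=
    NNReal.continuous_coe.measurable.comp (hκm.comp hΦ)
  have hwm : Measurable w := by
    rw [hw']
    apply Measurable.real_toNNReal
    exact ((continuous_id.rpow_const fun x => Or.inr (by positivity)).measurable).comp hrm
  have hwcoe : (fun x => ((w x : ℝ≥0) : ℝ≥0∞))
      = fun x => (kfac n (sProj n x) : ℝ≥0∞) ^ (2 * d) := by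
    funext x
    rw [hw']
    have h0 : ((Real.toNNReal ((kfac n (sProj n x) : ℝ) ^ (2 * d)) : ℝ≥0) : ℝ≥0∞)
        = ENNReal.ofReal ((kfac n (sProj n x) : ℝ) ^ (2 * d)) := rfl
    rw [h0, ← ENNReal.ofReal_rpow_of_pos (by exact_mod_cast kfac_pos _),
      ENNReal.ofReal_coe_nnreal]
  have hmn : Measurable fun y : EuclideanSpace ℝ (Fin n) => ‖y‖ ^ 2 :=
    (continuous_norm.pow 2).measurable
  have hsim : Measurable (stereoInv n) := by
    refine (PiLp.continuous_toLp 2 _).measurable.comp (f := fun y i => (stereoInv n y) i) ?_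
    apply measurable_pi_lambda
    intro i
    induction i using Fin.lastCases with
    | last =>
      simp only [stereoInv, PiLp.toLp_apply, Fin.lastCases_last]
      exact (measurable_const.add hmn).div (measurable_const.add hmn)
    | cast i =>
      simp only [stereoInv, PiLp.toLp_apply, Fin.lastCases_castSucc]
      exact (measurable_const.mul (PiLp.continuous_apply 2 _ i).measurable).div (measurable_const.add hmn)
  have hgm : Measurable g := by
    have hgfun : g = fun y => 2 ^ (n - 1) * f (stereoInv n y) / (1 + ‖y‖ ^ 2) ^ (n - 1) :=
      funext hg
    rw [hgfun]
    exact (measurable_const.mul (hf.measurable.comp hsim)).div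
      ((measurable_const.add hmn).pow_const _)
  have hdnat : d = ((n - 1 : ℕ) : ℝ) := by
    rw [hd', Nat.cast_sub (by omega : 1 ≤ n)]
    norm_num
  rw [sphericalTransform, sphericalMeanTransform, ← hd', ← hA', ← hB']
  calc ∫ x in A, f x ∂μH[d]
      = ∫ x, w x • g (sProj n x) ∂(μH[d].restrict A) := by
        refine (setIntegral_congr_fun hAm ?_).symm
        intro x hx
        have hx1 := (hAmem x hx).1
        have hx2 := (hAmem x hx).2
        have hc : (1:ℝ) - x (Fin.last n) ≠ 0 := by linarith
        have hκsq := kfac_sProj_sq x hx1 hx2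
        have h1N := one_add_norm_sProj_sq x hx1 hx2
        have hrw : ((kfac n (sProj n x) : ℝ)) ^ (2 * d)
            = (1 / (1 - x (Fin.last n))) ^ (n - 1 : ℕ) := by
          have e2 : ((kfac n (sProj n x) : ℝ)) ^ ((2:ℝ) * d)
              = (((kfac n (sProj n x) : ℝ)) ^ (2:ℕ)) ^ d := by
            rw [← Real.rpow_natCast ((kfac n (sProj n x) : ℝ)) 2,
              ← Real.rpow_mul (NNReal.coe_nonneg _)]
            norm_num
          rw [e2, hκsq, hdnat, Real.rpow_natCast]
        show w x • g (sProj n x) = f x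
        rw [NNReal.smul_def, hw']
        rw [Real.coe_toNNReal _ (Real.rpow_nonneg (NNReal.coe_nonneg _) _)]
        rw [hg, hinv x hx, h1N, hrw]
        have hpow : ((2:ℝ) / (1 - x (Fin.last n))) ^ (n - 1 : ℕ) ≠ 0 := by
          apply pow_ne_zero
          positivity
        rw [smul_eq_mul]
        field_simp
        rw [div_pow, div_pow, one_pow]
        field_simp
    _ = ∫ x, g (sProj n x) ∂((μH[d].restrict A).withDensity fun x => ((w x : ℝ≥0) : ℝ≥0∞)) :=
        (integral_withDensity_eq_integral_smul hwm _).symm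
    _ = ∫ y, g y ∂(Measure.map (sProj n)
          ((μH[d].restrict A).withDensity fun x => ((w x : ℝ≥0) : ℝ≥0∞))) :=
        (integral_map hΦ.aemeasurable hgm.aestronglyMeasurable).symm
    _ = ∫ y in B, g y ∂μH[d] := by rw [hwcoe, hmeq]
end

section
/- Let n ≥ 2, let I be an open interval and let γ = (γ₁, γ₂) : I → ℝ² be twice continuously differentiable with |γ(t)| < 1, D(t) ≠ 0 and γ₁′(t)γ₂″(t) − γ₁″(t)γ₂′(t) ≠ 0 for all t ∈ I. Then γ₁′(t)² + γ₂′(t)² − E(t)² > 0 for all t, the curve δ is continuously differentiable with δ′(t) ≠ 0 for all t ∈ I, and the surface of revolution M = {(δ₁(t)ω, δ₂(t)) : t ∈ I, ω ∈ S^{n−1}} ⊂ ℝ^n × ℝ is space like: for every t ∈ I, ω ∈ S^{n−1}, a ∈ ℝ and w ∈ ℝ^n with w·ω = 0, the tangent vector v = (a δ₁′(t) ω + δ₁(t) w, a δ₂′(t)) ∈ ℝ^{n+1} of M satisfies v_{n+1}² ≤ v₁² + ⋯ + v_n². -/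
/-- `D(t) = γ₁(t)γ₂′(t) − γ₂(t)γ₁′(t) + γ₁′(t)`: nonvanishing means the tangent line to `γ`
at `t` does not pass through the north pole `(0,1)`. -/
noncomputable def Dfn (γ₁ γ₂ : ℝ → ℝ) (t : ℝ) : ℝ :=
  γ₁ t * deriv γ₂ t - γ₂ t * deriv γ₁ t + deriv γ₁ t

/-- `E(t) = γ₁(t)γ₂′(t) − γ₂(t)γ₁′(t)`. -/
noncomputable def Efn (γ₁ γ₂ : ℝ → ℝ) (t : ℝ) : ℝ :=
  γ₁ t * deriv γ₂ t - γ₂ t * deriv γ₁ t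

/-- First component `δ₁(t) = γ₂′(t)/D(t)` of the image curve (the center coordinate). -/
noncomputable def delta1 (γ₁ γ₂ : ℝ → ℝ) (t : ℝ) : ℝ :=
  deriv γ₂ t / Dfn γ₁ γ₂ t

/-- Second component `δ₂(t) = √(γ₁′(t)² + γ₂′(t)² − E(t)²)/|D(t)|` (the radius coordinate). -/
noncomputable def delta2 (γ₁ γ₂ : ℝ → ℝ) (t : ℝ) : ℝ :=
  Real.sqrt ((deriv γ₁ t) ^ 2 + (deriv γ₂ t) ^ 2 - Efn γ₁ γ₂ t ^ 2) / |Dfn γ₁ γ₂ t|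

set_option maxHeartbeats 1000000 in
/-- For a regular `C²` curve `γ` inside the unit circle whose tangent lines avoid the north
pole, the curve `δ = (δ₁, δ₂)` is `C¹` with nonvanishing derivative, and the surface of
revolution `M = {(δ₁(t)ω, δ₂(t)) : t ∈ I, ω ∈ S^{n−1}} ⊂ ℝⁿ × ℝ` is space like: every tangent
vector `v = (a δ₁′(t) ω + δ₁(t) w, a δ₂′(t))` (with `w ⊥ ω`) satisfies
`v_{n+1}² ≤ v₁² + ⋯ + v_n²`. -/
theorem stmt4 (n : ℕ) (hn : 2 ≤ n) (a b : ℝ) (γ₁ γ₂ : ℝ → ℝ)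
    (hγ₁ : ContDiffOn ℝ 2 γ₁ (Set.Ioo a b)) (hγ₂ : ContDiffOn ℝ 2 γ₂ (Set.Ioo a b))
    (hin : ∀ t ∈ Set.Ioo a b, (γ₁ t) ^ 2 + (γ₂ t) ^ 2 < 1)
    (hD : ∀ t ∈ Set.Ioo a b, Dfn γ₁ γ₂ t ≠ 0)
    (hreg : ∀ t ∈ Set.Ioo a b,
      deriv γ₁ t * deriv (deriv γ₂) t - deriv (deriv γ₁) t * deriv γ₂ t ≠ 0) :
    (∀ t ∈ Set.Ioo a b, 0 < (deriv γ₁ t) ^ 2 + (deriv γ₂ t) ^ 2 - Efn γ₁ γ₂ t ^ 2) ∧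
    ContDiffOn ℝ 1 (delta1 γ₁ γ₂) (Set.Ioo a b) ∧
    ContDiffOn ℝ 1 (delta2 γ₁ γ₂) (Set.Ioo a b) ∧
    (∀ t ∈ Set.Ioo a b,
      (deriv (delta1 γ₁ γ₂) t, deriv (delta2 γ₁ γ₂) t) ≠ (0, 0)) ∧
    ∀ t ∈ Set.Ioo a b, ∀ ω : EuclideanSpace ℝ (Fin n), ‖ω‖ = 1 →
      ∀ a' : ℝ, ∀ w : EuclideanSpace ℝ (Fin n), inner ℝ w ω = (0 : ℝ) →
        (a' * deriv (delta2 γ₁ γ₂) t) ^ 2 ≤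
          ‖(a' * deriv (delta1 γ₁ γ₂) t) • ω + delta1 γ₁ γ₂ t • w‖ ^ 2 := by
  have hI : IsOpen (Set.Ioo a b) := isOpen_Ioo
  -- C¹ smoothness of the first derivatives
  have hγ₁d : ContDiffOn ℝ 1 (deriv γ₁) (Set.Ioo a b) :=
    hγ₁.deriv_of_isOpen hI (by norm_num)
  have hγ₂d : ContDiffOn ℝ 1 (deriv γ₂) (Set.Ioo a b) :=
    hγ₂.deriv_of_isOpen hI (by norm_num)
  have hγ₁c : ContDiffOn ℝ 1 γ₁ (Set.Ioo a b) := hγ₁.of_le (by norm_num)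
  have hγ₂c : ContDiffOn ℝ 1 γ₂ (Set.Ioo a b) := hγ₂.of_le (by norm_num)
  have hDc : ContDiffOn ℝ 1 (Dfn γ₁ γ₂) (Set.Ioo a b) :=
    ((hγ₁c.mul hγ₂d).sub (hγ₂c.mul hγ₁d)).add hγ₁d
  have hFc : ContDiffOn ℝ 1
      (fun t => (deriv γ₁ t) ^ 2 + (deriv γ₂ t) ^ 2 - Efn γ₁ γ₂ t ^ 2) (Set.Ioo a b) :=
    ((hγ₁d.pow 2).add (hγ₂d.pow 2)).sub (((hγ₁c.mul hγ₂d).sub (hγ₂c.mul hγ₁d)).pow 2)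
  -- Part 1 : positivity
  have hFpos : ∀ t ∈ Set.Ioo a b,
      0 < (deriv γ₁ t) ^ 2 + (deriv γ₂ t) ^ 2 - Efn γ₁ γ₂ t ^ 2 := by
    intro t ht
    have hW := hreg t ht
    have hpq : 0 < (deriv γ₁ t) ^ 2 + (deriv γ₂ t) ^ 2 := by
      rcases eq_or_ne (deriv γ₁ t) 0 with h1 | h1
      · rcases eq_or_ne (deriv γ₂ t) 0 with h2 | h2
        · exact absurd (by rw [h1, h2]; ring) hW
        · positivity
      · positivity
    have hin' := hin t ht
    have : Efn γ₁ γ₂ t = γ₁ t * deriv γ₂ t - γ₂ t * deriv γ₁ t := rfl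
    rw [this]
    nlinarith [sq_nonneg (γ₁ t * deriv γ₁ t + γ₂ t * deriv γ₂ t), hpq, hin',
      mul_pos (by nlinarith : (0:ℝ) < 1 - (γ₁ t ^ 2 + γ₂ t ^ 2)) hpq]
  -- pointwise derivative facts
  have hx' : ∀ t ∈ Set.Ioo a b, HasDerivAt γ₁ (deriv γ₁ t) t := fun t ht =>
    ((hγ₁c.differentiableOn (by norm_num)).differentiableAt (hI.mem_nhds ht)).hasDerivAt
  have hy' : ∀ t ∈ Set.Ioo a b, HasDerivAt γ₂ (deriv γ₂ t) t := fun t ht =>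
    ((hγ₂c.differentiableOn (by norm_num)).differentiableAt (hI.mem_nhds ht)).hasDerivAt
  have hp' : ∀ t ∈ Set.Ioo a b, HasDerivAt (deriv γ₁) (deriv (deriv γ₁) t) t := fun t ht =>
    ((hγ₁d.differentiableOn (by norm_num)).differentiableAt (hI.mem_nhds ht)).hasDerivAt
  have hq' : ∀ t ∈ Set.Ioo a b, HasDerivAt (deriv γ₂) (deriv (deriv γ₂) t) t := fun t ht =>
    ((hγ₂d.differentiableOn (by norm_num)).differentiableAt (hI.mem_nhds ht)).hasDerivAt
  have hDd : ∀ t ∈ Set.Ioo a b, HasDerivAt (Dfn γ₁ γ₂)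
      (γ₁ t * deriv (deriv γ₂) t - γ₂ t * deriv (deriv γ₁) t + deriv (deriv γ₁) t) t := by
    intro t ht
    have := (((hx' t ht).mul (hq' t ht)).sub ((hy' t ht).mul (hp' t ht))).add (hp' t ht)
    convert this using 1
    all_goals try rfl
    ring
  have hFd : ∀ t ∈ Set.Ioo a b, HasDerivAt
      (fun u => (deriv γ₁ u) ^ 2 + (deriv γ₂ u) ^ 2 - Efn γ₁ γ₂ u ^ 2)
      (2 * deriv γ₁ t * deriv (deriv γ₁) t + 2 * deriv γ₂ t * deriv (deriv γ₂) t
        - 2 * Efn γ₁ γ₂ t * (γ₁ t * deriv (deriv γ₂) t - γ₂ t * deriv (deriv γ₁) t)) t := by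
    intro t ht
    have hEd : HasDerivAt (Efn γ₁ γ₂)
        (γ₁ t * deriv (deriv γ₂) t - γ₂ t * deriv (deriv γ₁) t) t := by
      have := ((hx' t ht).mul (hq' t ht)).sub ((hy' t ht).mul (hp' t ht))
      convert this using 1
      all_goals try rfl
      ring
    have := (((hp' t ht).pow 2).add ((hq' t ht).pow 2)).sub (hEd.pow 2)
    convert this using 1
    all_goals try rfl
    push_cast
    ring
  -- the auxiliary form of delta2
  have hEq2 : Set.EqOn (delta2 γ₁ γ₂)
      (fun u => Real.sqrt (((deriv γ₁ u) ^ 2 + (deriv γ₂ u) ^ 2 - Efn γ₁ γ₂ u ^ 2)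
        / Dfn γ₁ γ₂ u ^ 2)) (Set.Ioo a b) := by
    intro u hu
    have hF := hFpos u hu
    simp only [delta2]
    rw [Real.sqrt_div hF.le, Real.sqrt_sq_eq_abs]
  constructor
  · exact hFpos
  constructor
  · exact hγ₂d.div hDc hD
  constructor
  · refine ContDiffOn.congr ?_ hEq2
    intro t ht
    have hGne : ((deriv γ₁ t) ^ 2 + (deriv γ₂ t) ^ 2 - Efn γ₁ γ₂ t ^ 2)
        / Dfn γ₁ γ₂ t ^ 2 ≠ 0 :=
      div_ne_zero (hFpos t ht).ne' (pow_ne_zero _ (hD t ht))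
    have hGc : ContDiffAt ℝ 1 (fun u => ((deriv γ₁ u) ^ 2 + (deriv γ₂ u) ^ 2
        - Efn γ₁ γ₂ u ^ 2) / Dfn γ₁ γ₂ u ^ 2) t := by
      have := (hFc.div (hDc.pow 2) (fun u hu => pow_ne_zero _ (hD u hu)))
      exact (this t ht).contDiffAt (hI.mem_nhds ht)
    exact ((Real.contDiffAt_sqrt hGne).comp t hGc).contDiffWithinAt
  -- derivative computations at a fixed point
  have hd1 : ∀ t ∈ Set.Ioo a b, deriv (delta1 γ₁ γ₂) t =
      (1 - γ₂ t) * (deriv γ₁ t * deriv (deriv γ₂) t - deriv (deriv γ₁) t * deriv γ₂ t)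
        / Dfn γ₁ γ₂ t ^ 2 := by
    intro t ht
    have h := (hq' t ht).div (hDd t ht) (hD t ht)
    have : deriv (delta1 γ₁ γ₂) t = _ := h.deriv
    rw [this]
    have hDval : Dfn γ₁ γ₂ t = γ₁ t * deriv γ₂ t - γ₂ t * deriv γ₁ t + deriv γ₁ t := rfl
    congr 1
    rw [hDval]
    ring
  have hd2 : ∀ t ∈ Set.Ioo a b, ∀ ht : t ∈ Set.Ioo a b,
      deriv (delta2 γ₁ γ₂) t =
      ((2 * deriv γ₁ t * deriv (deriv γ₁) t + 2 * deriv γ₂ t * deriv (deriv γ₂) t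
          - 2 * Efn γ₁ γ₂ t * (γ₁ t * deriv (deriv γ₂) t - γ₂ t * deriv (deriv γ₁) t))
          * Dfn γ₁ γ₂ t ^ 2
        - ((deriv γ₁ t) ^ 2 + (deriv γ₂ t) ^ 2 - Efn γ₁ γ₂ t ^ 2)
          * (2 * Dfn γ₁ γ₂ t
            * (γ₁ t * deriv (deriv γ₂) t - γ₂ t * deriv (deriv γ₁) t + deriv (deriv γ₁) t)))
        / Dfn γ₁ γ₂ t ^ 4
        / (2 * Real.sqrt (((deriv γ₁ t) ^ 2 + (deriv γ₂ t) ^ 2 - Efn γ₁ γ₂ t ^ 2)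
            / Dfn γ₁ γ₂ t ^ 2)) := by
    intro t ht _
    have hGd : HasDerivAt (fun u => ((deriv γ₁ u) ^ 2 + (deriv γ₂ u) ^ 2
        - Efn γ₁ γ₂ u ^ 2) / Dfn γ₁ γ₂ u ^ 2)
        (((2 * deriv γ₁ t * deriv (deriv γ₁) t + 2 * deriv γ₂ t * deriv (deriv γ₂) t
          - 2 * Efn γ₁ γ₂ t * (γ₁ t * deriv (deriv γ₂) t - γ₂ t * deriv (deriv γ₁) t))
          * Dfn γ₁ γ₂ t ^ 2
        - ((deriv γ₁ t) ^ 2 + (deriv γ₂ t) ^ 2 - Efn γ₁ γ₂ t ^ 2)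
          * (2 * Dfn γ₁ γ₂ t
            * (γ₁ t * deriv (deriv γ₂) t - γ₂ t * deriv (deriv γ₁) t + deriv (deriv γ₁) t)))
        / Dfn γ₁ γ₂ t ^ 4) t := by
      have := (hFd t ht).div ((hDd t ht).pow 2) (pow_ne_zero _ (hD t ht))
      convert this using 1
      all_goals try rfl
      push_cast [Pi.pow_apply]
      ring
    have hGne : ((deriv γ₁ t) ^ 2 + (deriv γ₂ t) ^ 2 - Efn γ₁ γ₂ t ^ 2)
        / Dfn γ₁ γ₂ t ^ 2 ≠ 0 :=
      div_ne_zero (hFpos t ht).ne' (pow_ne_zero _ (hD t ht))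
    have hsq := hGd.sqrt hGne
    have : deriv (delta2 γ₁ γ₂) t = _ :=
      (Filter.EventuallyEq.deriv_eq (hEq2.eventuallyEq_of_mem (hI.mem_nhds ht))).trans hsq.deriv
    exact this
  -- the key inequality : (δ₂′)² ≤ (δ₁′)²
  have hkey : ∀ t ∈ Set.Ioo a b,
      (deriv (delta2 γ₁ γ₂) t) ^ 2 ≤ (deriv (delta1 γ₁ γ₂) t) ^ 2 := by
    intro t ht
    set x := γ₁ t
    set y := γ₂ t
    set p := deriv γ₁ t
    set q := deriv γ₂ t
    set p2 := deriv (deriv γ₁) t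
    set q2 := deriv (deriv γ₂) t
    have hEval : Efn γ₁ γ₂ t = x * q - y * p := rfl
    have hDval : Dfn γ₁ γ₂ t = x * q - y * p + p := rfl
    set Dv := Dfn γ₁ γ₂ t with hDv
    set Fv : ℝ := p ^ 2 + q ^ 2 - Efn γ₁ γ₂ t ^ 2 with hFv
    have hFp : 0 < Fv := hFpos t ht
    have hDne : Dv ≠ 0 := hD t ht
    have hGpos : 0 < Fv / Dv ^ 2 := by positivity
    have hSG : Real.sqrt (Fv / Dv ^ 2) > 0 := Real.sqrt_pos.2 hGpos
    have hSG2 : Real.sqrt (Fv / Dv ^ 2) ^ 2 = Fv / Dv ^ 2 := Real.sq_sqrt hGpos.le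
    set E' : ℝ := x * q2 - y * p2 with hE'
    set D' : ℝ := x * q2 - y * p2 + p2 with hD'
    set F' : ℝ := 2 * p * p2 + 2 * q * q2 - 2 * Efn γ₁ γ₂ t * E' with hF'
    have h2 : deriv (delta2 γ₁ γ₂) t =
        (F' * Dv ^ 2 - Fv * (2 * Dv * D')) / Dv ^ 4 / (2 * Real.sqrt (Fv / Dv ^ 2)) :=
      hd2 t ht ht
    have h1 : deriv (delta1 γ₁ γ₂) t = (1 - y) * (p * q2 - p2 * q) / Dv ^ 2 := hd1 t ht
    have hB2 : (deriv (delta2 γ₁ γ₂) t) ^ 2 =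
        (F' * Dv - 2 * Fv * D') ^ 2 / (4 * Fv * Dv ^ 4) := by
      rw [h2, div_pow, div_pow, mul_pow, hSG2]
      rw [div_div]
      rw [div_eq_div_iff (by positivity) (by positivity)]
      field_simp
      ring
    have hA2 : (deriv (delta1 γ₁ γ₂) t) ^ 2 =
        ((1 - y) * (p * q2 - p2 * q)) ^ 2 / Dv ^ 4 := by
      rw [h1, div_pow]
      ring
    rw [hA2, hB2]
    rw [div_le_div_iff₀ (by positivity) (by positivity)]
    have hu : (0:ℝ) < 1 - x ^ 2 - y ^ 2 := by have := hin t ht; linarith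
    have key : ((1 - y) * (p * q2 - p2 * q)) ^ 2 * (4 * Fv * Dv ^ 4)
        - (F' * Dv - 2 * Fv * D') ^ 2 * Dv ^ 4
        = 4 * (1 - x ^ 2 - y ^ 2) * Dv ^ 6 * (p * q2 - p2 * q) ^ 2 := by
      rw [hF', hFv, hD', hE', hEval, hDval]
      ring
    linarith [key, mul_nonneg (mul_nonneg (by linarith : (0:ℝ) ≤ 4 * (1 - x ^ 2 - y ^ 2))
      (by positivity : (0:ℝ) ≤ Dv ^ 6)) (sq_nonneg (p * q2 - p2 * q))]
  constructor
  · -- δ′ ≠ 0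
    intro t ht
    have h1 := hd1 t ht
    have hne : deriv (delta1 γ₁ γ₂) t ≠ 0 := by
      rw [h1]
      have hu : γ₂ t < 1 := by nlinarith [hin t ht, sq_nonneg (γ₁ t)]
      exact div_ne_zero (mul_ne_zero (by linarith) (hreg t ht)) (pow_ne_zero _ (hD t ht))
    simp only [ne_eq, Prod.mk.injEq, not_and]
    intro h
    exact absurd h hne
  · -- space like
    intro t ht ω hω a' w hw
    have hBA := hkey t ht
    have hiz : inner ℝ ((a' * deriv (delta1 γ₁ γ₂) t) • ω) (delta1 γ₁ γ₂ t • w) = (0:ℝ) := by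
      rw [real_inner_smul_left, real_inner_smul_right, real_inner_comm, hw]
      ring
    rw [norm_add_sq_real, hiz]
    have hnω : ‖(a' * deriv (delta1 γ₁ γ₂) t) • ω‖ ^ 2 = (a' * deriv (delta1 γ₁ γ₂) t) ^ 2 := by
      rw [norm_smul, Real.norm_eq_abs, hω, mul_one, sq_abs]
    rw [hnω]
    nlinarith [mul_le_mul_of_nonneg_left hBA (sq_nonneg a'),
      sq_nonneg (‖delta1 γ₁ γ₂ t • w‖)]
end

section
/- Let I be an open interval and let γ = (γ₁, γ₂) : I → ℝ² be twice continuously differentiable with |γ(t)| < 1, D(t) ≠ 0 and γ₁′(t)γ₂″(t) − γ₁″(t)γ₂′(t) ≠ 0 for all t ∈ I. Then γ₁′(t)² + γ₂′(t)² − E(t)² > 0 for all t, and the curve δ : I → ℝ² is continuously differentiable with δ′(t) ≠ 0 and δ₁′(t)² ≥ δ₂′(t)² for every t ∈ I; that is, δ traces a space like curve in ℝ × ℝ⁺ (at each point its tangent direction (v₁, v₂) satisfies v₂² ≤ v₁², equivalently its normal (n₁, n₂) satisfies n₂² ≥ n₁²). -/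
lemma key_ineq (p q p1 q1 p2 q2 : ℝ) (h : p^2 + q^2 ≤ 1) :
    ((2*p1*p2+2*q1*q2-2*(p*q1-q*p1)*(p*q2-q*p2))*(p*q1-q*p1+p1)
      - 2*(p1^2+q1^2-(p*q1-q*p1)^2)*(p*q2-q*p2+p2))^2
    ≤ 4*(p1^2+q1^2-(p*q1-q*p1)^2)
      * (q2*(p*q1-q*p1+p1) - q1*(p*q2-q*p2+p2))^2 := by
  have hid : 4*(p1^2+q1^2-(p*q1-q*p1)^2) * (q2*(p*q1-q*p1+p1) - q1*(p*q2-q*p2+p2))^2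
      - ((2*p1*p2+2*q1*q2-2*(p*q1-q*p1)*(p*q2-q*p2))*(p*q1-q*p1+p1)
        - 2*(p1^2+q1^2-(p*q1-q*p1)^2)*(p*q2-q*p2+p2))^2
      = 4*(1-p^2-q^2)*((1-q)*p1+p*q1)^2*(p1*q2-p2*q1)^2 := by ring
  have h1 : (0:ℝ) ≤ 4*(1-p^2-q^2) := by linarith
  have h2 : (0:ℝ) ≤ 4*(1-p^2-q^2)*((1-q)*p1+p*q1)^2*(p1*q2-p2*q1)^2 :=
    mul_nonneg (mul_nonneg h1 (sq_nonneg _)) (sq_nonneg _)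
  linarith

lemma hexp_aux (s A dF dD F : ℝ) (hs : s^2 = F) (hs0 : 0 < s) :
    (dF/(2*s)*A - s*dD)^2 = (dF*A - 2*F*dD)^2/(4*F) := by
  subst hs
  have : s ≠ 0 := ne_of_gt hs0
  field_simp
  ring

lemma perpoint (a b : ℝ) (γ₁ γ₂ : ℝ → ℝ)
    (hγ₁ : ContDiffOn ℝ 2 γ₁ (Set.Ioo a b)) (hγ₂ : ContDiffOn ℝ 2 γ₂ (Set.Ioo a b))
    (hin : ∀ t ∈ Set.Ioo a b, (γ₁ t) ^ 2 + (γ₂ t) ^ 2 < 1)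
    (hD : ∀ t ∈ Set.Ioo a b, Dfn γ₁ γ₂ t ≠ 0)
    (hreg : ∀ t ∈ Set.Ioo a b,
      deriv γ₁ t * deriv (deriv γ₂) t - deriv (deriv γ₁) t * deriv γ₂ t ≠ 0)
    (hF : ∀ t ∈ Set.Ioo a b,
      0 < (deriv γ₁ t) ^ 2 + (deriv γ₂ t) ^ 2 - Efn γ₁ γ₂ t ^ 2)
    (t : ℝ) (ht : t ∈ Set.Ioo a b) :
    ContDiffAt ℝ 1 (delta1 γ₁ γ₂) t ∧ ContDiffAt ℝ 1 (delta2 γ₁ γ₂) t ∧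
    deriv (delta1 γ₁ γ₂) t ≠ 0 ∧
    (deriv (delta2 γ₁ γ₂) t)^2 ≤ (deriv (delta1 γ₁ γ₂) t)^2 := by
  have hIoo : IsOpen (Set.Ioo a b) := isOpen_Ioo
  have hnh : Set.Ioo a b ∈ nhds t := hIoo.mem_nhds ht
  have hc1 : ContDiffOn ℝ 1 (deriv γ₁) (Set.Ioo a b) :=
    hγ₁.deriv_of_isOpen hIoo (by norm_num)
  have hc2 : ContDiffOn ℝ 1 (deriv γ₂) (Set.Ioo a b) :=
    hγ₂.deriv_of_isOpen hIoo (by norm_num)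
  set p := γ₁ t with hp'
  set q := γ₂ t with hq'
  set p1 := deriv γ₁ t with hp1'
  set q1 := deriv γ₂ t with hq1'
  set p2 := deriv (deriv γ₁) t with hp2'
  set q2 := deriv (deriv γ₂) t with hq2'
  have hp : HasDerivAt γ₁ p1 t :=
    ((hγ₁.differentiableOn (by norm_num)).differentiableAt hnh).hasDerivAt
  have hq : HasDerivAt γ₂ q1 t :=
    ((hγ₂.differentiableOn (by norm_num)).differentiableAt hnh).hasDerivAt
  have hp1 : HasDerivAt (deriv γ₁) p2 t :=
    ((hc1.differentiableOn (by norm_num)).differentiableAt hnh).hasDerivAt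
  have hq1 : HasDerivAt (deriv γ₂) q2 t :=
    ((hc2.differentiableOn (by norm_num)).differentiableAt hnh).hasDerivAt
  have hDne : Dfn γ₁ γ₂ t ≠ 0 := hD t ht
  have hDval : Dfn γ₁ γ₂ t = p * q1 - q * p1 + p1 := rfl
  -- derivatives of D, E, F
  have hDd : HasDerivAt (Dfn γ₁ γ₂) (p * q2 - q * p2 + p2) t := by
    unfold Dfn
    refine (((hp.mul hq1).sub (hq.mul hp1)).add hp1).congr_deriv ?_
    ring
  have hEd : HasDerivAt (Efn γ₁ γ₂) (p * q2 - q * p2) t := by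
    unfold Efn
    refine ((hp.mul hq1).sub (hq.mul hp1)).congr_deriv ?_
    ring
  have hEval : Efn γ₁ γ₂ t = p * q1 - q * p1 := rfl
  have hFd : HasDerivAt (fun s => (deriv γ₁ s) ^ 2 + (deriv γ₂ s) ^ 2 - Efn γ₁ γ₂ s ^ 2)
      (2*p1*p2 + 2*q1*q2 - 2*(p*q1-q*p1)*(p*q2-q*p2)) t := by
    refine (((hp1.pow 2).add (hq1.pow 2)).sub (hEd.pow 2)).congr_deriv ?_
    rw [hEval]
    push_cast
    ring
  -- smoothness
  have cp : ContDiffAt ℝ 1 γ₁ t := (hγ₁.contDiffAt hnh).of_le one_le_two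
  have cq : ContDiffAt ℝ 1 γ₂ t := (hγ₂.contDiffAt hnh).of_le one_le_two
  have cp1 : ContDiffAt ℝ 1 (deriv γ₁) t := hc1.contDiffAt hnh
  have cq1 : ContDiffAt ℝ 1 (deriv γ₂) t := hc2.contDiffAt hnh
  have cD : ContDiffAt ℝ 1 (Dfn γ₁ γ₂) t := by
    unfold Dfn
    exact ((cp.mul cq1).sub (cq.mul cp1)).add cp1
  have cE : ContDiffAt ℝ 1 (Efn γ₁ γ₂) t := by
    unfold Efn
    exact (cp.mul cq1).sub (cq.mul cp1)
  have cFf : ContDiffAt ℝ 1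
      (fun s => (deriv γ₁ s) ^ 2 + (deriv γ₂ s) ^ 2 - Efn γ₁ γ₂ s ^ 2) t :=
    ((cp1.pow 2).add (cq1.pow 2)).sub (cE.pow 2)
  have cδ1 : ContDiffAt ℝ 1 (delta1 γ₁ γ₂) t := by
    unfold delta1
    exact cq1.div cD hDne
  -- derivative of delta1
  have hδ1d : HasDerivAt (delta1 γ₁ γ₂)
      ((q2 * Dfn γ₁ γ₂ t - q1 * (p * q2 - q * p2 + p2)) / Dfn γ₁ γ₂ t ^ 2) t := by
    unfold delta1
    exact hq1.div hDd hDne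
  have hqlt : q < 1 := by nlinarith [hin t ht, sq_nonneg p]
  have hW : p1 * q2 - p2 * q1 ≠ 0 := hreg t ht
  have hd1val : deriv (delta1 γ₁ γ₂) t
      = ((1 - q) * (p1 * q2 - p2 * q1)) / Dfn γ₁ γ₂ t ^ 2 := by
    rw [hδ1d.deriv, hDval]
    ring_nf
  have hd1ne : deriv (delta1 γ₁ γ₂) t ≠ 0 := by
    rw [hd1val]
    exact div_ne_zero (mul_ne_zero (by linarith) hW) (pow_ne_zero 2 hDne)
  -- delta2
  have hFpos := hF t ht
  have hFne : (deriv γ₁ t) ^ 2 + (deriv γ₂ t) ^ 2 - Efn γ₁ γ₂ t ^ 2 ≠ 0 := ne_of_gt hFpos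
  set F := p1 ^ 2 + q1 ^ 2 - Efn γ₁ γ₂ t ^ 2 with hF'
  set dF := 2*p1*p2 + 2*q1*q2 - 2*(p*q1-q*p1)*(p*q2-q*p2) with hdF'
  set dD := p * q2 - q * p2 + p2 with hdD'
  have hg : HasDerivAt (fun s => Real.sqrt ((deriv γ₁ s) ^ 2 + (deriv γ₂ s) ^ 2 - Efn γ₁ γ₂ s ^ 2) / Dfn γ₁ γ₂ s)
      ((dF / (2 * Real.sqrt F) * Dfn γ₁ γ₂ t - Real.sqrt F * dD) / Dfn γ₁ γ₂ t ^ 2) t :=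
    (hFd.sqrt hFne).div hDd hDne
  have cg : ContDiffAt ℝ 1
      (fun s => Real.sqrt ((deriv γ₁ s) ^ 2 + (deriv γ₂ s) ^ 2 - Efn γ₁ γ₂ s ^ 2) / Dfn γ₁ γ₂ s) t :=
    (cFf.sqrt hFne).div cD hDne
  set dg := (dF / (2 * Real.sqrt F) * Dfn γ₁ γ₂ t - Real.sqrt F * dD) / Dfn γ₁ γ₂ t ^ 2 with hdg'
  have hmain : ContDiffAt ℝ 1 (delta2 γ₁ γ₂) t ∧ (deriv (delta2 γ₁ γ₂) t)^2 = dg^2 := by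
    rcases hDne.lt_or_gt with hneg | hpos
    · have h2 : ∀ᶠ s in nhds t, Dfn γ₁ γ₂ s < 0 :=
        cD.continuousAt.preimage_mem_nhds (Iio_mem_nhds hneg)
      have heq : delta2 γ₁ γ₂ =ᶠ[nhds t]
          fun s => -(Real.sqrt ((deriv γ₁ s) ^ 2 + (deriv γ₂ s) ^ 2 - Efn γ₁ γ₂ s ^ 2) / Dfn γ₁ γ₂ s) := by
        filter_upwards [h2] with s hs
        unfold delta2
        rw [abs_of_neg hs, div_neg]
      refine ⟨cg.neg.congr_of_eventuallyEq heq, ?_⟩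
      rw [(hg.neg.congr_of_eventuallyEq heq).deriv]
      ring
    · have h2 : ∀ᶠ s in nhds t, 0 < Dfn γ₁ γ₂ s :=
        cD.continuousAt.preimage_mem_nhds (Ioi_mem_nhds hpos)
      have heq : delta2 γ₁ γ₂ =ᶠ[nhds t]
          fun s => Real.sqrt ((deriv γ₁ s) ^ 2 + (deriv γ₂ s) ^ 2 - Efn γ₁ γ₂ s ^ 2) / Dfn γ₁ γ₂ s := by
        filter_upwards [h2] with s hs
        unfold delta2
        rw [abs_of_pos hs]
      exact ⟨cg.congr_of_eventuallyEq heq, by rw [(hg.congr_of_eventuallyEq heq).deriv]⟩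
  refine ⟨cδ1, hmain.1, hd1ne, ?_⟩
  -- the spacelike inequality
  rw [hmain.2, hd1val]
  have hs0 : 0 < Real.sqrt F := Real.sqrt_pos.mpr hFpos
  have hs2 : Real.sqrt F ^ 2 = F := Real.sq_sqrt hFpos.le
  have hkey := key_ineq p q p1 q1 p2 q2 (le_of_lt (hin t ht))
  have hFval : F = p1^2 + q1^2 - (p*q1 - q*p1)^2 := by rw [hF', hEval]
  rw [hdg', hDval, div_pow, div_pow, div_le_div_iff_of_pos_right (by positivity)]
  have hexp : (dF / (2 * Real.sqrt F) * (p * q1 - q * p1 + p1) - Real.sqrt F * dD) ^ 2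
      = (dF * (p * q1 - q * p1 + p1) - 2 * F * dD) ^ 2 / (4 * F) :=
    hexp_aux _ _ _ _ _ hs2 hs0
  rw [hexp, div_le_iff₀ (by positivity)]
  calc (dF * (p * q1 - q * p1 + p1) - 2 * F * dD) ^ 2
      = ((2*p1*p2+2*q1*q2-2*(p*q1-q*p1)*(p*q2-q*p2))*(p*q1-q*p1+p1)
        - 2*(p1^2+q1^2-(p*q1-q*p1)^2)*(p*q2-q*p2+p2))^2 := by
        rw [hdF', hFval, hdD']
    _ ≤ 4*(p1^2+q1^2-(p*q1-q*p1)^2)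
        * (q2*(p*q1-q*p1+p1) - q1*(p*q2-q*p2+p2))^2 := hkey
    _ = ((1 - q) * (p1 * q2 - p2 * q1)) ^ 2 * (4 * F) := by
        rw [hFval]; ring

/-- For a regular `C²` curve `γ` inside the unit circle whose tangent lines avoid the north
pole, the curve `δ = (δ₁, δ₂)` is `C¹` with nonvanishing derivative and traces a space like
curve: `δ₂′(t)² ≤ δ₁′(t)²`. -/
theorem stmt6 (a b : ℝ) (γ₁ γ₂ : ℝ → ℝ)
    (hγ₁ : ContDiffOn ℝ 2 γ₁ (Set.Ioo a b)) (hγ₂ : ContDiffOn ℝ 2 γ₂ (Set.Ioo a b))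
    (hin : ∀ t ∈ Set.Ioo a b, (γ₁ t) ^ 2 + (γ₂ t) ^ 2 < 1)
    (hD : ∀ t ∈ Set.Ioo a b, Dfn γ₁ γ₂ t ≠ 0)
    (hreg : ∀ t ∈ Set.Ioo a b,
      deriv γ₁ t * deriv (deriv γ₂) t - deriv (deriv γ₁) t * deriv γ₂ t ≠ 0) :
    (∀ t ∈ Set.Ioo a b, 0 < (deriv γ₁ t) ^ 2 + (deriv γ₂ t) ^ 2 - Efn γ₁ γ₂ t ^ 2) ∧
    ContDiffOn ℝ 1 (delta1 γ₁ γ₂) (Set.Ioo a b) ∧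
    ContDiffOn ℝ 1 (delta2 γ₁ γ₂) (Set.Ioo a b) ∧
    ∀ t ∈ Set.Ioo a b,
      (deriv (delta1 γ₁ γ₂) t, deriv (delta2 γ₁ γ₂) t) ≠ (0, 0) ∧
      (deriv (delta2 γ₁ γ₂) t) ^ 2 ≤ (deriv (delta1 γ₁ γ₂) t) ^ 2 := by
  have hIoo : IsOpen (Set.Ioo a b) := isOpen_Ioo
  have hc1 : ContDiffOn ℝ 1 (deriv γ₁) (Set.Ioo a b) :=
    hγ₁.deriv_of_isOpen hIoo (by norm_num)
  have hc2 : ContDiffOn ℝ 1 (deriv γ₂) (Set.Ioo a b) :=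
    hγ₂.deriv_of_isOpen hIoo (by norm_num)
  -- Part 1: positivity of F
  have hF : ∀ t ∈ Set.Ioo a b,
      0 < (deriv γ₁ t) ^ 2 + (deriv γ₂ t) ^ 2 - Efn γ₁ γ₂ t ^ 2 := by
    intro t ht
    have hne : ¬(deriv γ₁ t = 0 ∧ deriv γ₂ t = 0) := by
      rintro ⟨h1, h2⟩
      exact hreg t ht (by rw [h1, h2]; ring)
    have hsq : 0 < (deriv γ₁ t) ^ 2 + (deriv γ₂ t) ^ 2 := by
      rcases not_and_or.mp hne with h | h
      · positivity
      · positivity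
    have h1 : 0 < 1 - ((γ₁ t)^2 + (γ₂ t)^2) := by linarith [hin t ht]
    simp only [Efn]
    nlinarith [sq_nonneg (γ₁ t * deriv γ₁ t + γ₂ t * deriv γ₂ t), mul_pos h1 hsq]
  have pp := perpoint a b γ₁ γ₂ hγ₁ hγ₂ hin hD hreg hF
  refine ⟨hF, fun t ht => ((pp t ht).1).contDiffWithinAt,
    fun t ht => ((pp t ht).2.1).contDiffWithinAt, fun t ht => ?_⟩
  obtain ⟨-, -, h3, h4⟩ := pp t ht
  exact ⟨fun h => h3 (congrArg Prod.fst h), h4⟩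
end

section
/- Let I be an open interval and let γ = (γ₁, γ₂) : I → ℝ² be continuously differentiable with |γ(t)| < 1, γ′(t) ≠ 0 and D(t) ≠ 0 for all t ∈ I. Fix t ∈ I and let L = {γ(t) + s·γ′(t) : s ∈ ℝ} be the tangent line at γ(t). Then γ₁′(t)² + γ₂′(t)² − E(t)² > 0, L does not contain (0, 1), L meets the unit circle S¹ ⊂ ℝ² in exactly two points, and the image of these two points under the stereographic projection λ(x) = x₁/(1 − x₂) is the two-element set { δ₁(t) − δ₂(t) , δ₁(t) + δ₂(t) }. -/
/-- The tangent line to `γ` at `t`. -/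
noncomputable def tangentLine (γ₁ γ₂ : ℝ → ℝ) (t : ℝ) : Set (ℝ × ℝ) :=
  {p | ∃ s : ℝ, p = (γ₁ t + s * deriv γ₁ t, γ₂ t + s * deriv γ₂ t)}

/-- For a `C¹` curve inside the unit circle with `γ′ ≠ 0` and `D ≠ 0`, the tangent line at `t`
misses the north pole `(0,1)`, meets the unit circle in exactly two points, and the
stereographic projection `λ(x) = x₁/(1 − x₂)` maps these two points to
`{δ₁(t) − δ₂(t), δ₁(t) + δ₂(t)}`. -/
theorem stmt12 (a b : ℝ) (γ₁ γ₂ : ℝ → ℝ)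
    (hγ₁ : ContDiffOn ℝ 1 γ₁ (Set.Ioo a b)) (hγ₂ : ContDiffOn ℝ 1 γ₂ (Set.Ioo a b))
    (hin : ∀ s ∈ Set.Ioo a b, (γ₁ s) ^ 2 + (γ₂ s) ^ 2 < 1)
    (hvel : ∀ s ∈ Set.Ioo a b, (deriv γ₁ s, deriv γ₂ s) ≠ (0, 0))
    (hD : ∀ s ∈ Set.Ioo a b, Dfn γ₁ γ₂ s ≠ 0)
    (t : ℝ) (ht : t ∈ Set.Ioo a b) :
    0 < (deriv γ₁ t) ^ 2 + (deriv γ₂ t) ^ 2 - Efn γ₁ γ₂ t ^ 2 ∧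
    ((0 : ℝ), (1 : ℝ)) ∉ tangentLine γ₁ γ₂ t ∧
    (tangentLine γ₁ γ₂ t ∩ {p : ℝ × ℝ | p.1 ^ 2 + p.2 ^ 2 = 1}).ncard = 2 ∧
    (fun p : ℝ × ℝ => p.1 / (1 - p.2)) ''
        (tangentLine γ₁ γ₂ t ∩ {p : ℝ × ℝ | p.1 ^ 2 + p.2 ^ 2 = 1}) =
      {delta1 γ₁ γ₂ t - delta2 γ₁ γ₂ t, delta1 γ₁ γ₂ t + delta2 γ₁ γ₂ t} := by
  simp only [tangentLine, Efn, delta1, delta2, Dfn, Set.mem_setOf_eq]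
  set x := γ₁ t with hx
  set y := γ₂ t with hy
  set u := deriv γ₁ t with hu
  set v := deriv γ₂ t with hv
  have hint : x ^ 2 + y ^ 2 < 1 := hin t ht
  have hDt : x * v - y * u + u ≠ 0 := by
    have := hD t ht; rwa [Dfn, ← hx, ← hy, ← hu, ← hv] at this
  have hW : 0 < u ^ 2 + v ^ 2 := by
    have h := hvel t ht
    rcases eq_or_ne u 0 with h1 | h1
    · rcases eq_or_ne v 0 with h2 | h2
      · exact absurd (by simp [h1, h2] : (u, v) = ((0:ℝ),(0:ℝ))) h
      · nlinarith [sq_nonneg u, mul_self_pos.mpr h2]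
    · nlinarith [sq_nonneg v, mul_self_pos.mpr h1]
  have hQ : 0 < u ^ 2 + v ^ 2 - (x * v - y * u) ^ 2 := by
    nlinarith [sq_nonneg (x * u + y * v)]
  set R := Real.sqrt (u ^ 2 + v ^ 2 - (x * v - y * u) ^ 2) with hR
  have hRpos : 0 < R := Real.sqrt_pos.mpr hQ
  have hR2 : R ^ 2 = u ^ 2 + v ^ 2 - (x * v - y * u) ^ 2 := Real.sq_sqrt hQ.le
  have hWne : u ^ 2 + v ^ 2 ≠ 0 := ne_of_gt hW
  set s₁ : ℝ := (-(x * u + y * v) - R) / (u ^ 2 + v ^ 2) with hs₁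
  set s₂ : ℝ := (-(x * u + y * v) + R) / (u ^ 2 + v ^ 2) with hs₂
  have hfac : ∀ s : ℝ, (x + s * u) ^ 2 + (y + s * v) ^ 2 - 1
      = (u ^ 2 + v ^ 2) * (s - s₁) * (s - s₂) := by
    intro s
    rw [hs₁, hs₂]
    field_simp
    linear_combination hR2
  have hpole : ¬ ∃ s : ℝ, ((0:ℝ), (1:ℝ)) = (x + s * u, y + s * v) := by
    rintro ⟨s, hs⟩
    rw [Prod.ext_iff] at hs
    exact hDt (by linear_combination -v * hs.1 + u * hs.2)
  set p₁ : ℝ × ℝ := (x + s₁ * u, y + s₁ * v) with hp₁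
  set p₂ : ℝ × ℝ := (x + s₂ * u, y + s₂ * v) with hp₂
  have hc₁ : (x + s₁ * u) ^ 2 + (y + s₁ * v) ^ 2 = 1 := by
    have := hfac s₁; simp only [sub_self, mul_zero, zero_mul] at this; linarith
  have hc₂ : (x + s₂ * u) ^ 2 + (y + s₂ * v) ^ 2 = 1 := by
    have := hfac s₂; simp only [sub_self, mul_zero] at this; linarith
  have hset : {p : ℝ × ℝ | ∃ s : ℝ, p = (x + s * u, y + s * v)}
      ∩ {p : ℝ × ℝ | p.1 ^ 2 + p.2 ^ 2 = 1} = {p₁, p₂} := by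
    ext p
    simp only [Set.mem_inter_iff, Set.mem_setOf_eq, Set.mem_insert_iff, Set.mem_singleton_iff]
    constructor
    · rintro ⟨⟨s, rfl⟩, hc⟩
      simp only at hc
      have h0 : (u ^ 2 + v ^ 2) * (s - s₁) * (s - s₂) = 0 := by rw [← hfac s]; linarith
      rcases mul_eq_zero.mp h0 with h0 | h0
      · rcases mul_eq_zero.mp h0 with h0 | h0
        · exact absurd h0 hWne
        · left; rw [hp₁, sub_eq_zero.mp h0]
      · right; rw [hp₂, sub_eq_zero.mp h0]
    · rintro (rfl | rfl)
      · exact ⟨⟨s₁, rfl⟩, hc₁⟩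
      · exact ⟨⟨s₂, rfl⟩, hc₂⟩
  have hs12 : s₁ ≠ s₂ := by
    rw [hs₁, hs₂]
    intro h
    rw [div_eq_div_iff hWne hWne] at h
    nlinarith
  have hpne : p₁ ≠ p₂ := by
    intro h
    rw [hp₁, hp₂, Prod.ext_iff] at h
    simp only at h
    have h1 : (s₁ - s₂) * u = 0 := by linarith [h.1, sub_mul s₁ s₂ u]
    have h2 : (s₁ - s₂) * v = 0 := by linarith [h.2, sub_mul s₁ s₂ v]
    have hs : s₁ - s₂ ≠ 0 := sub_ne_zero.mpr hs12
    have hu0 := (mul_eq_zero.mp h1).resolve_left hs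
    have hv0 := (mul_eq_zero.mp h2).resolve_left hs
    rw [hu0, hv0] at hW
    simp at hW
  have hden : ∀ s : ℝ, (x + s * u) ^ 2 + (y + s * v) ^ 2 = 1 → 1 - (y + s * v) ≠ 0 := by
    intro s hc h0
    have hy1 : y + s * v = 1 := by linarith
    rw [hy1] at hc
    have hx0 : x + s * u = 0 := by
      have h2 : (x + s * u) ^ 2 = 0 := by nlinarith
      exact pow_eq_zero_iff two_ne_zero |>.mp h2
    exact hpole ⟨s, by rw [Prod.ext_iff]; exact ⟨hx0.symm, hy1.symm⟩⟩
  have hden₁ := hden s₁ hc₁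
  have hden₂ := hden s₂ hc₂
  have hproj₁ : (x + s₁ * u) / (1 - (y + s₁ * v)) = (v - R) / (x * v - y * u + u) := by
    rw [div_eq_div_iff hden₁ hDt, hs₁]
    field_simp
    linear_combination v * hR2
  have hproj₂ : (x + s₂ * u) / (1 - (y + s₂ * v)) = (v + R) / (x * v - y * u + u) := by
    rw [div_eq_div_iff hden₂ hDt, hs₂]
    field_simp
    linear_combination v * hR2
  refine ⟨hQ, hpole, ?_, ?_⟩
  · rw [hset]; exact Set.ncard_pair hpne
  · rw [hset, Set.image_pair]
    simp only [hp₁, hp₂]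
    rw [hproj₁, hproj₂]
    rcases hDt.lt_or_gt with hneg | hpos
    · rw [abs_of_neg hneg, div_neg, sub_neg_eq_add, ← sub_eq_add_neg,
        ← add_div, div_sub_div_same, Set.pair_comm]
    · rw [abs_of_pos hpos, ← add_div, div_sub_div_same]
end

section
/- Let I be an interval, let γ = (γ₁, γ₂) : I → ℝ² be twice continuously differentiable, and let t₀ ∈ I satisfy γ′(t₀) ≠ 0 and γ₁′(t₀)γ₂″(t₀) − γ₁″(t₀)γ₂′(t₀) ≠ 0. Then there exists ε > 0 such that for all t, t′ ∈ (t₀ − ε, t₀ + ε) ∩ I with t ≠ t′, the tangent vectors γ′(t) and γ′(t′) are not parallel, i.e. γ₁′(t)γ₂′(t′) − γ₂′(t)γ₁′(t′) ≠ 0. In particular, near a point where the regularity condition holds, no two distinct points of the curve have parallel tangent lines (the curve is locally convex there). -/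
open Set

private lemma aux13 (I : Set ℝ) (hconv : Convex ℝ I) (hU : UniqueDiffOn ℝ I)
    (γ₁ γ₂ : ℝ → ℝ)
    (hγ₁ : ContDiffOn ℝ 2 γ₁ I) (hγ₂ : ContDiffOn ℝ 2 γ₂ I)
    (t₀ : ℝ) (ht₀ : t₀ ∈ I)
    (hu0 : derivWithin γ₁ I t₀ ≠ 0)
    (hreg : derivWithin γ₁ I t₀ * derivWithin (derivWithin γ₂ I) I t₀ -
        derivWithin (derivWithin γ₁ I) I t₀ * derivWithin γ₂ I t₀ ≠ 0) :
    ∃ ε > 0, ∀ t ∈ Set.Ioo (t₀ - ε) (t₀ + ε) ∩ I, ∀ t' ∈ Set.Ioo (t₀ - ε) (t₀ + ε) ∩ I,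
      t ≠ t' →
        derivWithin γ₁ I t * derivWithin γ₂ I t' -
          derivWithin γ₂ I t * derivWithin γ₁ I t' ≠ 0 := by
  set u := derivWithin γ₁ I with hu_def
  set v := derivWithin γ₂ I with hv_def
  have hu1 : ContDiffOn ℝ 1 u I := hγ₁.derivWithin hU (by norm_num)
  have hv1 : ContDiffOn ℝ 1 v I := hγ₂.derivWithin hU (by norm_num)
  have hcu : ContinuousOn u I := hu1.continuousOn
  have hcv : ContinuousOn v I := hv1.continuousOn
  have hcu'0 : ContDiffOn ℝ 0 (derivWithin u I) I := hu1.derivWithin hU (by norm_num)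
  have hcv'0 : ContDiffOn ℝ 0 (derivWithin v I) I := hv1.derivWithin hU (by norm_num)
  have hcu' : ContinuousOn (derivWithin u I) I := hcu'0.continuousOn
  have hcv' : ContinuousOn (derivWithin v I) I := hcv'0.continuousOn
  set g : ℝ → ℝ := fun t => u t * derivWithin v I t - derivWithin u I t * v t with hg_def
  have hcg : ContinuousOn g I := by
    exact (hcu.mul hcv').sub (hcu'.mul hcv)
  -- eventually u ≠ 0 and g ≠ 0 near t₀ within I
  have h1 : ∀ᶠ t in nhdsWithin t₀ I, u t ≠ 0 := by
    have := (hcu t₀ ht₀).eventually_ne hu0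
    exact this
  have h2 : ∀ᶠ t in nhdsWithin t₀ I, g t ≠ 0 := by
    have := (hcg t₀ ht₀).eventually_ne hreg
    exact this
  obtain ⟨U, hUo, htU, hUP⟩ := mem_nhdsWithin.1 (h1.and h2)
  obtain ⟨ε, hε, hball⟩ := Metric.isOpen_iff.1 hUo t₀ htU
  refine ⟨ε, hε, ?_⟩
  have hJP : ∀ t ∈ Ioo (t₀ - ε) (t₀ + ε) ∩ I, u t ≠ 0 ∧ g t ≠ 0 := by
    intro t ht
    exact hUP ⟨hball (by rw [Real.ball_eq_Ioo]; exact ht.1), ht.2⟩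
  set J := Ioo (t₀ - ε) (t₀ + ε) ∩ I with hJ_def
  have hJconv : Convex ℝ J := (convex_Ioo _ _).inter hconv
  -- key claim for t < t'
  have key : ∀ t ∈ J, ∀ t' ∈ J, t < t' → u t * v t' - v t * u t' ≠ 0 := by
    intro t ht t' ht' hlt
    have hIcc : Icc t t' ⊆ J := hJconv.ordConnected.out ht ht'
    have hIccI : Icc t t' ⊆ I := fun x hx => (hIcc hx).2
    have hIooI : Ioo t t' ⊆ interior I :=
      interior_maximal (fun x hx => hIccI (Ioo_subset_Icc_self hx)) isOpen_Ioo
    set φ : ℝ → ℝ := fun x => v x / u x with hφ_def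
    have hφc : ContinuousOn φ (Icc t t') :=
      (hcv.mono hIccI).div (hcu.mono hIccI) (fun x hx => (hJP x (hIcc hx)).1)
    set φ' : ℝ → ℝ := fun x =>
      (derivWithin v I x * u x - v x * derivWithin u I x) / u x ^ 2 with hφ'_def
    have hφd : ∀ x ∈ Ioo t t', HasDerivAt φ (φ' x) x := by
      intro x hx
      have hxI : I ∈ nhds x := mem_interior_iff_mem_nhds.1 (hIooI hx)
      have hxmem : x ∈ I := mem_of_mem_nhds hxI
      have hdu : HasDerivAt u (derivWithin u I x) x :=
        ((hu1.differentiableOn one_ne_zero x hxmem).hasDerivWithinAt).hasDerivAt hxI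
      have hdv : HasDerivAt v (derivWithin v I x) x :=
        ((hv1.differentiableOn one_ne_zero x hxmem).hasDerivWithinAt).hasDerivAt hxI
      exact hdv.div hdu (hJP x (hIcc (Ioo_subset_Icc_self hx))).1
    obtain ⟨c, hc, hc'⟩ := exists_hasDerivAt_eq_slope φ φ' hlt hφc hφd
    have hcJ := hIcc (Ioo_subset_Icc_self hc)
    have hgc : g c ≠ 0 := (hJP c hcJ).2
    have huc : u c ≠ 0 := (hJP c hcJ).1
    have hφ'c : φ' c ≠ 0 := by
      simp only [hφ'_def]
      refine div_ne_zero ?_ (pow_ne_zero 2 huc)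
      intro h
      apply hgc
      simp only [hg_def]
      linarith
    have hslope : φ t' ≠ φ t := by
      intro h
      rw [hc'] at hφ'c
      apply hφ'c
      rw [h, sub_self, zero_div]
    have hut : u t ≠ 0 := (hJP t ht).1
    have hut' : u t' ≠ 0 := (hJP t' ht').1
    intro h
    apply hslope
    simp only [hφ_def]
    field_simp
    linarith [h]
  intro t ht t' ht' hne
  rcases lt_or_gt_of_ne hne with h | h
  · exact key t ht t' ht' h
  · intro hz
    exact key t' ht' t ht h (by linarith)

/-- Near a point of a `C²` plane curve where the velocity is nonzero and the regularity
condition `γ₁′γ₂″ − γ₁″γ₂′ ≠ 0` holds, no two distinct parameters give parallel tangent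
vectors (local convexity). Derivatives are taken within the interval `I`. -/
theorem stmt13 (I : Set ℝ) (hI : I.OrdConnected) (γ₁ γ₂ : ℝ → ℝ)
    (hγ₁ : ContDiffOn ℝ 2 γ₁ I) (hγ₂ : ContDiffOn ℝ 2 γ₂ I)
    (t₀ : ℝ) (ht₀ : t₀ ∈ I)
    (hvel : (derivWithin γ₁ I t₀, derivWithin γ₂ I t₀) ≠ (0, 0))
    (hreg : derivWithin γ₁ I t₀ * derivWithin (derivWithin γ₂ I) I t₀ -
        derivWithin (derivWithin γ₁ I) I t₀ * derivWithin γ₂ I t₀ ≠ 0) :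
    ∃ ε > 0, ∀ t ∈ Set.Ioo (t₀ - ε) (t₀ + ε) ∩ I, ∀ t' ∈ Set.Ioo (t₀ - ε) (t₀ + ε) ∩ I,
      t ≠ t' →
        derivWithin γ₁ I t * derivWithin γ₂ I t' -
          derivWithin γ₂ I t * derivWithin γ₁ I t' ≠ 0 := by
  by_cases hsub : I.Subsingleton
  · exact ⟨1, one_pos, fun t ht t' ht' hne => absurd (hsub ht.2 ht'.2) hne⟩
  · have hconv : Convex ℝ I := hI.convex
    obtain ⟨a, ha, b, hb, hab⟩ := not_subsingleton_iff.1 hsub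
    have hint : (interior I).Nonempty := by
      rcases lt_or_gt_of_ne hab with h | h
      · have : Ioo a b ⊆ interior I :=
          interior_maximal (fun x hx => hI.out ha hb ⟨hx.1.le, hx.2.le⟩) isOpen_Ioo
        exact (nonempty_Ioo.2 h).mono this
      · have : Ioo b a ⊆ interior I :=
          interior_maximal (fun x hx => hI.out hb ha ⟨hx.1.le, hx.2.le⟩) isOpen_Ioo
        exact (nonempty_Ioo.2 h).mono this
    have hU : UniqueDiffOn ℝ I := uniqueDiffOn_convex hconv hint
    have hcase : derivWithin γ₁ I t₀ ≠ 0 ∨ derivWithin γ₂ I t₀ ≠ 0 := by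
      by_contra hc
      push_neg at hc
      exact hvel (by rw [hc.1, hc.2])
    rcases hcase with h | h
    · exact aux13 I hconv hU γ₁ γ₂ hγ₁ hγ₂ t₀ ht₀ h hreg
    · obtain ⟨ε, hε, hprop⟩ := aux13 I hconv hU γ₂ γ₁ hγ₂ hγ₁ t₀ ht₀ h (by
        intro hz; apply hreg; linarith)
      refine ⟨ε, hε, fun t ht t' ht' hne hz => hprop t ht t' ht' hne (by linarith)⟩
end
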